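/- arXiv:1101.2913 — 4 statements merged into one kernel-verified Lean document; each statement's English description precedes it below -/
import Mathlib

section
/- Let n ≥ 1 and suppose α > 0 is such that the log-Sobolev inequality D(f,f) ≥ α·Ent(f²) holds for every f : {-1,1}^n → ℝ. Then for every ρ ∈ (0,1] and q = 1 + ρ^{−2αn}, one has ‖T_ρ f‖_q ≤ ‖f‖₂ for every f : {-1,1}^n → ℝ. -/
open Topology Filter


noncomputable section

/-- The real value `±1` associated with a Boolean coordinate (`true ↦ 1`, `false ↦ -1`). -/
def sgn (b : Bool) : ℝ := if b then 1 else -1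

/-- Expectation over the uniform probability measure on the hypercube `{-1,1}^n`,
identified with `Fin n → Bool`. -/
def cubeExpect {n : ℕ} (f : (Fin n → Bool) → ℝ) : ℝ :=
  (∑ x : Fin n → Bool, f x) / 2 ^ n

/-- The Fourier character `χ_S(x) = ∏_{i ∈ S} x_i`. -/
def chi {n : ℕ} (S : Finset (Fin n)) (x : Fin n → Bool) : ℝ :=
  ∏ i ∈ S, sgn (x i)

/-- The Fourier coefficient `f̂(S) = E[f(x) χ_S(x)]`. -/
def fourierCoef {n : ℕ} (f : (Fin n → Bool) → ℝ) (S : Finset (Fin n)) : ℝ :=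
  cubeExpect fun x => f x * chi S x

/-- The noise operator `T_ρ f = Σ_S ρ^{|S|} f̂(S) χ_S` (with `0^0 = 1`). -/
def noiseOp {n : ℕ} (ρ : ℝ) (f : (Fin n → Bool) → ℝ) (x : Fin n → Bool) : ℝ :=
  ∑ S : Finset (Fin n), ρ ^ S.card * fourierCoef f S * chi S x

/-- The normalized `ℓ_p` norm `‖f‖_p = (E |f|^p)^{1/p}`. -/
def cubeNorm {n : ℕ} (p : ℝ) (f : (Fin n → Bool) → ℝ) : ℝ :=
  (cubeExpect fun x => |f x| ^ p) ^ (1 / p)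

/-- `x` with its `i`-th coordinate negated. -/
def flipAt {n : ℕ} (x : Fin n → Bool) (i : Fin n) : Fin n → Bool :=
  Function.update x i (!(x i))

/-- The Dirichlet form `D(f,g) = ½ E_{x,i}[(f(x) − f(x^{⊕i}))(g(x) − g(x^{⊕i}))]`,
with `x` uniform on the cube and `i` uniform on the coordinates. -/
def dirichletForm {n : ℕ} (f g : (Fin n → Bool) → ℝ) : ℝ :=
  (1/2) * cubeExpect fun x =>
    (∑ i : Fin n, (f x - f (flipAt x i)) * (g x - g (flipAt x i))) / n

/-- The entropy `Ent(g) = E[g log g] − (E g) log (E g)` (with `0 log 0 = 0`,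
as `Real.log 0 = 0`). -/
def cubeEntropy {n : ℕ} (g : (Fin n → Bool) → ℝ) : ℝ :=
  cubeExpect (fun x => g x * Real.log (g x)) - cubeExpect g * Real.log (cubeExpect g)

/-- The variance `Var(f) = E[f²] − (E f)²`. -/
def cubeVar {n : ℕ} (f : (Fin n → Bool) → ℝ) : ℝ :=
  cubeExpect (fun x => f x ^ 2) - (cubeExpect f) ^ 2

/-- The influence of coordinate `i`: `Inf_i(f) = Σ_{S ∋ i} f̂(S)²`. -/
def influence {n : ℕ} (i : Fin n) (f : (Fin n → Bool) → ℝ) : ℝ :=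
  ∑ S ∈ Finset.univ.filter (fun S : Finset (Fin n) => i ∈ S), fourierCoef f S ^ 2

-- ## Layer 1 : basic facts

lemma sgn_neg (b : Bool) : sgn (!b) = - sgn b := by cases b <;> simp [sgn]

lemma sgn_mul_self (b : Bool) : sgn b * sgn b = 1 := by cases b <;> norm_num [sgn]

lemma abs_sgn (b : Bool) : |sgn b| = 1 := by cases b <;> norm_num [sgn]

lemma flipAt_apply {n : ℕ} (x : Fin n → Bool) (i j : Fin n) :
    flipAt x i j = if j = i then !(x i) else x j := by
  simp [flipAt, Function.update]

lemma flipAt_flipAt {n : ℕ} (x : Fin n → Bool) (i : Fin n) :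
    flipAt (flipAt x i) i = x := by
  funext j
  rcases eq_or_ne j i with rfl | h
  · simp [flipAt_apply]
  · simp [flipAt_apply, h]

def flipEquiv {n : ℕ} (i : Fin n) : (Fin n → Bool) ≃ (Fin n → Bool) where
  toFun x := flipAt x i
  invFun x := flipAt x i
  left_inv x := flipAt_flipAt x i
  right_inv x := flipAt_flipAt x i

lemma cubeExpect_comp_flip {n : ℕ} (h : (Fin n → Bool) → ℝ) (i : Fin n) :
    cubeExpect (fun x => h (flipAt x i)) = cubeExpect h := by
  unfold cubeExpect
  congr 1
  exact Fintype.sum_equiv (flipEquiv i) _ _ (fun x => rfl)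

lemma chi_flipAt {n : ℕ} (S : Finset (Fin n)) (x : Fin n → Bool) (i : Fin n) :
    chi S (flipAt x i) = (if i ∈ S then -1 else 1) * chi S x := by
  unfold chi
  by_cases hi : i ∈ S
  · rw [if_pos hi, ← Finset.prod_erase_mul _ _ hi, ← Finset.prod_erase_mul _ _ hi]
    have h1 : ∀ j ∈ S.erase i, sgn (flipAt x i j) = sgn (x j) := by
      intro j hj
      rw [flipAt_apply, if_neg (Finset.ne_of_mem_erase hj)]
    rw [Finset.prod_congr rfl h1, flipAt_apply, if_pos rfl, sgn_neg]
    ring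
  · rw [if_neg hi, one_mul]
    refine Finset.prod_congr rfl fun j hj => ?_
    rw [flipAt_apply, if_neg]
    rintro rfl; exact hi hj

-- kernel
def noiseKer {n : ℕ} (r : ℝ) (x y : Fin n → Bool) : ℝ :=
  ∏ i : Fin n, (1 + r * (sgn (x i) * sgn (y i)))

lemma noiseKer_expand {n : ℕ} (r : ℝ) (x y : Fin n → Bool) :
    noiseKer r x y = ∑ S : Finset (Fin n), r ^ S.card * chi S x * chi S y := by
  unfold noiseKer
  have := Fintype.prod_add (fun i : Fin n => r * (sgn (x i) * sgn (y i))) (fun _ => (1:ℝ))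
  rw [show (fun i : Fin n => 1 + r * (sgn (x i) * sgn (y i)))
      = (fun i : Fin n => (r * (sgn (x i) * sgn (y i)) + 1)) from funext fun i => add_comm _ _,
    this]
  refine Finset.sum_congr rfl fun S _ => ?_
  rw [Finset.prod_eq_one (fun _ _ => rfl), mul_one, Finset.prod_mul_distrib,
    Finset.prod_const, chi, chi, Finset.prod_mul_distrib]
  ring

lemma noiseKer_nonneg {n : ℕ} {r : ℝ} (h0 : 0 ≤ r) (h1 : r ≤ 1) (x y : Fin n → Bool) :
    0 ≤ noiseKer r x y := by
  refine Finset.prod_nonneg fun i _ => ?_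
  have : sgn (x i) * sgn (y i) = 1 ∨ sgn (x i) * sgn (y i) = -1 := by
    cases x i <;> cases y i <;> norm_num [sgn]
  rcases this with h | h <;> rw [h] <;> nlinarith

lemma noiseOp_eq_ker {n : ℕ} (r : ℝ) (f : (Fin n → Bool) → ℝ) (x : Fin n → Bool) :
    noiseOp r f x = cubeExpect (fun y => f y * noiseKer r x y) := by
  unfold noiseOp cubeExpect
  rw [eq_div_iff (by positivity : (2:ℝ)^n ≠ 0)]
  have : ∀ y, f y * noiseKer r x y
      = ∑ S : Finset (Fin n), r ^ S.card * chi S x * (f y * chi S y) := by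
    intro y
    rw [noiseKer_expand, Finset.mul_sum]
    exact Finset.sum_congr rfl fun S _ => by ring
  rw [Finset.sum_congr rfl fun y _ => this y, Finset.sum_comm, Finset.sum_mul]
  refine Finset.sum_congr rfl fun S _ => ?_
  rw [fourierCoef, cubeExpect, ← Finset.mul_sum]
  field_simp

lemma noiseKer_one {n : ℕ} (x y : Fin n → Bool) :
    noiseKer 1 x y = if x = y then (2:ℝ)^n else 0 := by
  unfold noiseKer
  by_cases h : x = y
  · subst h
    rw [if_pos rfl]
    rw [Finset.prod_congr rfl (fun i _ => by rw [sgn_mul_self]; norm_num : ∀ i ∈ Finset.univ, 1 + 1 * (sgn (x i) * sgn (x i)) = 2)]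
    simp [Finset.prod_const]
  · rw [if_neg h]
    obtain ⟨i, hi⟩ : ∃ i, x i ≠ y i := by
      by_contra hc; push_neg at hc; exact h (funext hc)
    refine Finset.prod_eq_zero (Finset.mem_univ i) ?_
    have : sgn (x i) * sgn (y i) = -1 := by
      cases hxi : x i <;> cases hyi : y i <;> simp_all [sgn]
    rw [this]; ring

lemma noiseOp_one {n : ℕ} (f : (Fin n → Bool) → ℝ) (x : Fin n → Bool) :
    noiseOp 1 f x = f x := by
  rw [noiseOp_eq_ker, cubeExpect]
  rw [Finset.sum_congr rfl fun y _ => by rw [noiseKer_one, mul_ite, mul_zero]]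
  rw [Finset.sum_ite_eq Finset.univ x (fun y => f y * 2^n)]
  simp

-- ## Layer 2 : expectation / operator algebra

lemma cubeExpect_mono {n : ℕ} {f g : (Fin n → Bool) → ℝ} (h : ∀ x, f x ≤ g x) :
    cubeExpect f ≤ cubeExpect g :=
  div_le_div_of_nonneg_right (Finset.sum_le_sum fun x _ => h x) (by positivity) |>.trans_eq rfl

lemma cubeExpect_add {n : ℕ} (f g : (Fin n → Bool) → ℝ) :
    cubeExpect (fun x => f x + g x) = cubeExpect f + cubeExpect g := by
  unfold cubeExpect; rw [Finset.sum_add_distrib, add_div]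

lemma cubeExpect_const_mul {n : ℕ} (c : ℝ) (f : (Fin n → Bool) → ℝ) :
    cubeExpect (fun x => c * f x) = c * cubeExpect f := by
  unfold cubeExpect; rw [← Finset.mul_sum, mul_div_assoc]

lemma cubeExpect_const {n : ℕ} (c : ℝ) :
    cubeExpect (fun _ : Fin n → Bool => c) = c := by
  unfold cubeExpect
  rw [Finset.sum_const, Finset.card_univ, Fintype.card_fun]
  simp [nsmul_eq_mul]

lemma cubeExpect_sum {n : ℕ} (h : Fin n → (Fin n → Bool) → ℝ) :
    cubeExpect (fun x => ∑ i, h i x) = ∑ i, cubeExpect (h i) := by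
  unfold cubeExpect
  rw [Finset.sum_comm, Finset.sum_div]

lemma cubeExpect_pos {n : ℕ} {f : (Fin n → Bool) → ℝ} (h : ∀ x, 0 < f x) :
    0 < cubeExpect f := by
  unfold cubeExpect
  apply div_pos _ (by positivity)
  exact Finset.sum_pos (fun x _ => h x) Finset.univ_nonempty

lemma sum_chi_eq_zero {n : ℕ} {S : Finset (Fin n)} (hS : S.Nonempty) :
    ∑ y : Fin n → Bool, chi S y = 0 := by
  obtain ⟨i, hi⟩ := hS
  have h1 : ∑ y : Fin n → Bool, chi S y = ∑ y : Fin n → Bool, chi S (flipAt y i) :=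
    (Fintype.sum_equiv (flipEquiv i) _ _ (fun y => rfl)).symm
  have h2 : ∀ y, chi S (flipAt y i) = - chi S y := by
    intro y; rw [chi_flipAt, if_pos hi]; ring
  rw [Finset.sum_congr rfl fun y _ => h2 y, Finset.sum_neg_distrib] at h1
  linarith

lemma cubeExpect_ker {n : ℕ} (r : ℝ) (x : Fin n → Bool) :
    cubeExpect (fun y => noiseKer r x y) = 1 := by
  unfold cubeExpect
  rw [Finset.sum_congr rfl fun y _ => noiseKer_expand r x y, Finset.sum_comm]
  have : ∀ S : Finset (Fin n), ∑ y : Fin n → Bool, r ^ S.card * chi S x * chi S y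
      = if S = ∅ then (2:ℝ)^n else 0 := by
    intro S
    rcases Finset.eq_empty_or_nonempty S with rfl | hS
    · simp [chi, Finset.card_univ, Fintype.card_fun]
    · rw [if_neg (Finset.nonempty_iff_ne_empty.mp hS), ← Finset.mul_sum,
        sum_chi_eq_zero hS, mul_zero]
  rw [Finset.sum_congr rfl fun S _ => this S, Finset.sum_ite_eq' Finset.univ ∅ (fun _ => (2:ℝ)^n)]
  simp

lemma noiseOp_mono {n : ℕ} {r : ℝ} (h0 : 0 ≤ r) (h1 : r ≤ 1)
    {f g : (Fin n → Bool) → ℝ} (h : ∀ x, f x ≤ g x) (x : Fin n → Bool) :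
    noiseOp r f x ≤ noiseOp r g x := by
  rw [noiseOp_eq_ker, noiseOp_eq_ker]
  exact cubeExpect_mono fun y =>
    mul_le_mul_of_nonneg_right (h y) (noiseKer_nonneg h0 h1 x y)

lemma noiseOp_const {n : ℕ} {r : ℝ} (c : ℝ) (x : Fin n → Bool) :
    noiseOp r (fun _ => c) x = c := by
  rw [noiseOp_eq_ker, show (fun y => (fun _ : Fin n → Bool => c) y * noiseKer r x y)
    = fun y => c * noiseKer r x y from rfl, cubeExpect_const_mul, cubeExpect_ker, mul_one]

lemma noiseOp_neg {n : ℕ} (r : ℝ) (f : (Fin n → Bool) → ℝ) (x : Fin n → Bool) :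
    noiseOp r (fun y => - f y) x = - noiseOp r f x := by
  rw [noiseOp_eq_ker, noiseOp_eq_ker]
  have : (fun y => (fun y => -f y) y * noiseKer r x y)
      = fun y => (-1) * (f y * noiseKer r x y) := by funext y; ring
  rw [this, cubeExpect_const_mul]; ring

lemma abs_noiseOp_le {n : ℕ} {r : ℝ} (h0 : 0 ≤ r) (h1 : r ≤ 1)
    {f g : (Fin n → Bool) → ℝ} (h : ∀ x, |f x| ≤ g x) (x : Fin n → Bool) :
    |noiseOp r f x| ≤ noiseOp r g x := by
  rw [abs_le]
  constructor
  · rw [← noiseOp_neg]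
    exact noiseOp_mono h0 h1 (fun y => by have := h y; rw [abs_le] at this; linarith) x
  · exact noiseOp_mono h0 h1 (fun y => (le_abs_self _).trans (h y)) x

lemma noiseOp_ge {n : ℕ} {r ε : ℝ} (h0 : 0 ≤ r) (h1 : r ≤ 1)
    {g : (Fin n → Bool) → ℝ} (h : ∀ x, ε ≤ g x) (x : Fin n → Bool) :
    ε ≤ noiseOp r g x := by
  have := noiseOp_mono h0 h1 (f := fun _ => ε) h x
  rwa [noiseOp_const] at this

-- Dirichlet form identity
lemma dirichletForm_eq {n : ℕ} (f g : (Fin n → Bool) → ℝ) :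
    dirichletForm f g
      = (1/(n:ℝ)) * cubeExpect (fun x => ∑ i, (f x - f (flipAt x i)) * g x) := by
  unfold dirichletForm
  have key : ∀ i : Fin n,
      cubeExpect (fun x => (f x - f (flipAt x i)) * (g x - g (flipAt x i)))
      = 2 * cubeExpect (fun x => (f x - f (flipAt x i)) * g x) := by
    intro i
    have flip : cubeExpect (fun x => (f x - f (flipAt x i)) * g (flipAt x i))
        = cubeExpect (fun x => (f (flipAt x i) - f x) * g x) := by
      rw [← cubeExpect_comp_flip (fun x => (f (flipAt x i) - f x) * g x) i]
      congr 1; funext x; rw [flipAt_flipAt]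
    have expand : cubeExpect (fun x => (f x - f (flipAt x i)) * (g x - g (flipAt x i)))
        = cubeExpect (fun x => (f x - f (flipAt x i)) * g x)
          + cubeExpect (fun x => (-1) * ((f x - f (flipAt x i)) * g (flipAt x i))) := by
      rw [← cubeExpect_add]; congr 1; funext x; ring
    rw [expand, cubeExpect_const_mul, flip, ← cubeExpect_const_mul (-1)]
    have : cubeExpect (fun x => (-1) * ((f (flipAt x i) - f x) * g x))
        = cubeExpect (fun x => (f x - f (flipAt x i)) * g x) := by
      congr 1; funext x; ring
    rw [this]; ring
  have lhs : cubeExpect (fun x =>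
        (∑ i : Fin n, (f x - f (flipAt x i)) * (g x - g (flipAt x i))) / n)
      = (1/(n:ℝ)) * ∑ i, cubeExpect (fun x => (f x - f (flipAt x i)) * (g x - g (flipAt x i))) := by
    rw [← cubeExpect_sum]
    rw [← cubeExpect_const_mul]
    congr 1; funext x; field_simp
  rw [lhs, Finset.sum_congr rfl fun i _ => key i, ← Finset.mul_sum, cubeExpect_sum]
  ring

-- ## Layer 3 : pointwise Stroock-Varopoulos inequality

lemma tangent_ineq {x p : ℝ} (hx : 1 ≤ x) (hp : 1 ≤ p) :
    x ^ p - 1 ≤ p * (x - 1) * x ^ (p - 1) := by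
  have hx0 : (0:ℝ) < x := lt_of_lt_of_le one_pos hx
  have hx1 : (0:ℝ) < 1/x := by positivity
  have hb := one_add_mul_self_le_rpow_one_add
    (s := 1/x - 1) (by linarith) hp
  rw [show (1:ℝ) + (1/x - 1) = 1/x by ring] at hb
  have hu : (0:ℝ) < x ^ p := Real.rpow_pos_of_pos hx0 p
  have h1x : (1/x : ℝ) ^ p = 1 / x ^ p := by
    rw [one_div, Real.inv_rpow hx0.le, one_div]
  rw [h1x] at hb
  set u := x ^ p with hu'
  set v := x ^ (p-1) with hv'
  have hv : v * x = u := by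
    rw [hu', hv', ← Real.rpow_add_one hx0.ne', sub_add_cancel]
  have h2 : (1 + p*(1/x-1)) * (u*x) ≤ (1/u)*(u*x) :=
    mul_le_mul_of_nonneg_right hb (by positivity)
  have h3 : (1 + p*(1/x-1)) * (u*x) = u*x + p*u - p*u*x := by
    field_simp; ring
  have h4 : (1/u)*(u*x) = x := by field_simp
  rw [h3, h4] at h2
  rw [← mul_le_mul_iff_left₀ hx0]
  calc (u - 1) * x = u*x - x := by ring
    _ ≤ p*u*x - p*u := by linarith
    _ = p * (x-1) * (v*x) := by rw [hv]; ring
    _ = p * (x-1) * v * x := by ring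

lemma sv_one {q : ℝ} (hq : 2 ≤ q) {x : ℝ} (hx : 1 ≤ x) :
    (x ^ (q/2) - 1)^2 ≤ q^2/(4*(q-1)) * ((x - 1) * (x ^ (q-1) - 1)) := by
  have hq1 : (0:ℝ) < q - 1 := by linarith
  have hq0 : (0:ℝ) < q := by linarith
  set K : ℝ := q^2/(4*(q-1)) with hK
  set G : ℝ → ℝ := fun x => K * ((x - 1) * (x ^ (q-1) - 1)) - (x ^ (q/2) - 1)^2 with hG
  set G₁ : ℝ → ℝ := fun x =>
    K * ((x ^ (q-1) - 1) + (x - 1) * ((q-1) * x ^ (q-2)))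
      - q * x ^ (q/2-1) * (x ^ (q/2) - 1) with hG₁
  set G₂ : ℝ → ℝ := fun x =>
    (q*(q-2)/2) * x ^ (q/2-2) * ((q/2) * (x - 1) * x ^ (q/2-1) - (x ^ (q/2) - 1)) with hG₂
  have hDG : ∀ y : ℝ, 0 < y → HasDerivAt G (G₁ y) y := by
    intro y hy0
    have h1 : HasDerivAt (fun x : ℝ => x - 1) 1 y := (hasDerivAt_id y).sub_const 1
    have h2 : HasDerivAt (fun x : ℝ => x ^ (q-1) - 1) ((q-1) * y ^ (q-1-1)) y :=
      (Real.hasDerivAt_rpow_const (Or.inl hy0.ne')).sub_const 1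
    have h5 : HasDerivAt (fun x : ℝ => x ^ (q/2) - 1) ((q/2) * y ^ (q/2-1)) y :=
      (Real.hasDerivAt_rpow_const (Or.inl hy0.ne')).sub_const 1
    have hD := ((h1.mul h2).const_mul K).sub (h5.pow 2)
    convert hD using 1
    all_goals try rfl
    rw [show q-1-1 = q-2 by ring]
    ring
  have hDG₁ : ∀ y : ℝ, 0 < y → HasDerivAt G₁ (G₂ y) y := by
    intro y hy0
    have h2 : HasDerivAt (fun x : ℝ => x ^ (q-1) - 1) ((q-1) * y ^ (q-1-1)) y :=
      (Real.hasDerivAt_rpow_const (Or.inl hy0.ne')).sub_const 1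
    have h1 : HasDerivAt (fun x : ℝ => x - 1) 1 y := (hasDerivAt_id y).sub_const 1
    have h3 : HasDerivAt (fun x : ℝ => (q-1) * x ^ (q-2)) ((q-1) * ((q-2) * y ^ (q-2-1))) y :=
      (Real.hasDerivAt_rpow_const (Or.inl hy0.ne')).const_mul (q-1)
    have h4 : HasDerivAt (fun x : ℝ => q * x ^ (q/2-1)) (q * ((q/2-1) * y ^ (q/2-1-1))) y :=
      (Real.hasDerivAt_rpow_const (Or.inl hy0.ne')).const_mul q
    have h5 : HasDerivAt (fun x : ℝ => x ^ (q/2) - 1) ((q/2) * y ^ (q/2-1)) y :=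
      (Real.hasDerivAt_rpow_const (Or.inl hy0.ne')).sub_const 1
    have hD := ((h2.add (h1.mul h3)).const_mul K).sub ((h4.mul h5))
    have e1 : y ^ (q-2) = y ^ (q/2-1) * y ^ (q/2-1) := by
      rw [← Real.rpow_add hy0, show q/2-1 + (q/2-1) = q - 2 by ring]
    have e2 : y ^ (q-2-1) = y ^ (q/2-2) * y ^ (q/2-1) := by
      rw [← Real.rpow_add hy0, show q/2-2 + (q/2-1) = q-2-1 by ring]
    have e3 : y ^ (q/2-1-1) = y ^ (q/2-2) := by
      rw [show q/2-1-1 = q/2-2 by ring]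
    convert hD using 1
    all_goals try rfl
    rw [e2, e3, show q-1-1 = q-2 by ring, e1, hK, hG₂]
    field_simp
    ring
  -- G₁ is nonneg on [1, x], hence G is monotone there, so G x ≥ G 1 = 0
  have hG₂nonneg : ∀ y : ℝ, 1 ≤ y → 0 ≤ G₂ y := by
    intro y hy
    have hy0 : (0:ℝ) < y := lt_of_lt_of_le one_pos hy
    have htan : y ^ (q/2) - 1 ≤ (q/2) * (y - 1) * y ^ (q/2-1) :=
      tangent_ineq hy (by linarith)
    have : (0:ℝ) ≤ (q/2) * (y - 1) * y ^ (q/2-1) - (y ^ (q/2) - 1) := by linarith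
    rw [hG₂]
    have h1 : (0:ℝ) ≤ q*(q-2)/2 := by nlinarith
    have h2 : (0:ℝ) ≤ y ^ (q/2-2) := (Real.rpow_pos_of_pos hy0 _).le
    positivity
  have key : ∀ (F F' : ℝ → ℝ), (∀ y : ℝ, 0 < y → HasDerivAt F (F' y) y) →
      (∀ y : ℝ, 1 ≤ y → 0 ≤ F' y) → ∀ y : ℝ, 1 ≤ y → F 1 ≤ F y := by
    intro F F' hD hpos y hy
    have hmono : MonotoneOn F (Set.Ici (1:ℝ)) := by
      apply monotoneOn_of_deriv_nonneg (convex_Ici 1)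
      · intro z hz
        exact (hD z (lt_of_lt_of_le one_pos hz)).continuousAt.continuousWithinAt
      · intro z hz
        rw [interior_Ici] at hz
        exact (hD z (lt_trans one_pos hz)).differentiableAt.differentiableWithinAt
      · intro z hz
        rw [interior_Ici] at hz
        rw [(hD z (lt_trans one_pos hz)).deriv]
        exact hpos z hz.le
    exact hmono (Set.mem_Ici.mpr le_rfl) (Set.mem_Ici.mpr hy) hy
  have hG₁1 : G₁ 1 = 0 := by simp [hG₁, Real.one_rpow]
  have hG₁nonneg : ∀ y : ℝ, 1 ≤ y → 0 ≤ G₁ y := by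
    intro y hy
    have := key G₁ G₂ hDG₁ hG₂nonneg y hy
    rwa [hG₁1] at this
  have hGx := key G G₁ hDG hG₁nonneg x hx
  have hG1 : G 1 = 0 := by simp [hG, Real.one_rpow]
  rw [hG1, hG] at hGx
  simp only at hGx
  linarith [hGx]

lemma sv_pointwise {q a b : ℝ} (hq : 2 ≤ q) (ha : 0 < a) (hb : 0 < b) :
    4*(q-1)/q^2 * (a ^ (q/2) - b ^ (q/2))^2 ≤ (a - b) * (a ^ (q-1) - b ^ (q-1)) := by
  have hq0 : (0:ℝ) < q := by linarith
  have hq1 : (0:ℝ) < q - 1 := by linarith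
  -- reduce to scaled version
  have main : ∀ a b : ℝ, 0 < a → 0 < b → b ≤ a →
      (a ^ (q/2) - b ^ (q/2))^2 ≤ q^2/(4*(q-1)) * ((a - b) * (a ^ (q-1) - b ^ (q-1))) := by
    intro a b ha hb hba
    have hx : 1 ≤ a / b := (one_le_div hb).mpr hba
    have h := sv_one hq hx
    have e : ∀ p : ℝ, (a / b) ^ p = a ^ p / b ^ p := fun p => Real.div_rpow ha.le hb.le p
    rw [e, e] at h
    have hbq : (0:ℝ) < b ^ q := Real.rpow_pos_of_pos hb q
    have hb2 : (0:ℝ) < b ^ (q/2) := Real.rpow_pos_of_pos hb _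
    have hb1 : (0:ℝ) < b ^ (q-1) := Real.rpow_pos_of_pos hb _
    have hsplit1 : b ^ (q/2) * b ^ (q/2) = b ^ q := by
      rw [← Real.rpow_add hb, show q/2+q/2 = q by ring]
    have hsplit2 : b * b ^ (q-1) = b ^ q := by
      rw [mul_comm, ← Real.rpow_add_one hb.ne', sub_add_cancel]
    have hmul := mul_le_mul_of_nonneg_right h hbq.le
    have c0 : (a^(q/2)/b^(q/2)-1)*b^(q/2) = a^(q/2)-b^(q/2) := by field_simp
    calc (a ^ (q/2) - b ^ (q/2))^2
        = ((a ^ (q/2)/b ^ (q/2) - 1) * b^(q/2))^2 := by rw [c0]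
      _ = (a ^ (q/2)/b ^ (q/2) - 1)^2 * (b^(q/2) * b^(q/2)) := by ring
      _ = (a ^ (q/2)/b ^ (q/2) - 1)^2 * b^q := by rw [hsplit1]
      _ ≤ q^2/(4*(q-1)) * ((a/b - 1) * (a^(q-1)/b^(q-1) - 1)) * b^q := hmul
      _ = q^2/(4*(q-1)) * (((a/b-1)*b) * ((a^(q-1)/b^(q-1) - 1) * b^(q-1))) := by
          rw [← hsplit2]; ring
      _ = q^2/(4*(q-1)) * ((a - b) * (a ^ (q-1) - b ^ (q-1))) := by
          have c1 : (a/b-1)*b = a-b := by field_simp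
          have c2 : (a^(q-1)/b^(q-1)-1)*b^(q-1) = a^(q-1)-b^(q-1) := by field_simp
          rw [c1, c2]
  have symm : ∀ a b : ℝ, 0 < a → 0 < b →
      (a ^ (q/2) - b ^ (q/2))^2 ≤ q^2/(4*(q-1)) * ((a - b) * (a ^ (q-1) - b ^ (q-1))) := by
    intro a b ha hb
    rcases le_total b a with h | h
    · exact main a b ha hb h
    · have := main b a hb ha h
      calc (a ^ (q/2) - b ^ (q/2))^2 = (b ^ (q/2) - a ^ (q/2))^2 := by ring
        _ ≤ q^2/(4*(q-1)) * ((b - a) * (b ^ (q-1) - a ^ (q-1))) := this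
        _ = q^2/(4*(q-1)) * ((a - b) * (a ^ (q-1) - b ^ (q-1))) := by ring
  have h := symm a b ha hb
  have hpos : (0:ℝ) < 4*(q-1)/q^2 := by positivity
  have := mul_le_mul_of_nonneg_left h hpos.le
  calc 4*(q-1)/q^2 * (a ^ (q/2) - b ^ (q/2))^2
      ≤ 4*(q-1)/q^2 * (q^2/(4*(q-1)) * ((a - b) * (a ^ (q-1) - b ^ (q-1)))) := this
    _ = (a - b) * (a ^ (q-1) - b ^ (q-1)) := by field_simp

-- ## Layer 4 : the core differential inequality

section Core
variable {n : ℕ}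

/-- Comparison of Dirichlet forms via pointwise Stroock–Varopoulos. -/
lemma dirichlet_sv (hn : 1 ≤ n) {q : ℝ} (hq : 2 ≤ q) {u : (Fin n → Bool) → ℝ}
    (hu : ∀ x, 0 < u x) :
    4*(q-1)/q^2 * dirichletForm (fun x => u x ^ (q/2)) (fun x => u x ^ (q/2))
      ≤ dirichletForm u (fun x => u x ^ (q-1)) := by
  have hn' : (0:ℝ) < n := by exact_mod_cast hn
  unfold dirichletForm
  rw [show ∀ a : ℝ, 4*(q-1)/q^2 * (1/2 * a) = 1/2 * (4*(q-1)/q^2 * a) from fun a => by ring,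
    ← cubeExpect_const_mul]
  apply mul_le_mul_of_nonneg_left _ (by norm_num : (0:ℝ) ≤ 1/2)
  apply cubeExpect_mono
  intro x
  have e : 4*(q-1)/q^2 * ((∑ i, (u x ^ (q/2) - u (flipAt x i) ^ (q/2))
        * (u x ^ (q/2) - u (flipAt x i) ^ (q/2)))/(n:ℝ))
      = (∑ i, 4*(q-1)/q^2 * ((u x ^ (q/2) - u (flipAt x i) ^ (q/2))
        * (u x ^ (q/2) - u (flipAt x i) ^ (q/2))))/(n:ℝ) := by
    rw [mul_div_assoc', Finset.mul_sum]
  rw [e]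
  apply div_le_div_of_nonneg_right _ hn'.le
  apply Finset.sum_le_sum
  intro i _
  have h := sv_pointwise hq (hu x) (hu (flipAt x i))
  calc 4*(q-1)/q^2 * ((u x ^ (q/2) - u (flipAt x i) ^ (q/2))
        * (u x ^ (q/2) - u (flipAt x i) ^ (q/2)))
      = 4*(q-1)/q^2 * (u x ^ (q/2) - u (flipAt x i) ^ (q/2))^2 := by ring
    _ ≤ (u x - u (flipAt x i)) * (u x ^ (q-1) - u (flipAt x i) ^ (q-1)) := h

lemma core_ineq (hn : 1 ≤ n) {α : ℝ} (hα : 0 < α)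
    (hLS : ∀ f : (Fin n → Bool) → ℝ, α * cubeEntropy (fun x => f x ^ 2) ≤ dirichletForm f f)
    {r : ℝ} (hr0 : 0 < r) (hr1 : r ≤ 1)
    {u u' : (Fin n → Bool) → ℝ} (hu : ∀ x, 0 < u x)
    (hflip : ∀ x, (∑ i, (u x - u (flipAt x i))) = 2 * r * u' x)
    {c q qd : ℝ} (hc : c = 2*α*(n:ℝ)) (hq : q = 1 + r ^ (-c)) (hqd : qd = -c * r ^ (-c-1)) :
    0 ≤ q * cubeExpect (fun x => u x ^ q * (qd * Real.log (u x) + q * (u' x / u x)))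
      - qd * (cubeExpect fun x => u x ^ q) * Real.log (cubeExpect fun x => u x ^ q) := by
  have hn' : (0:ℝ) < n := by exact_mod_cast hn
  have hc0 : 0 < c := by rw [hc]; positivity
  have hq2 : 2 ≤ q := by
    have h1 : 1 ≤ r ^ (-c) :=
      Real.one_le_rpow_of_pos_of_le_one_of_nonpos hr0 hr1 (by linarith)
    rw [hq]; linarith
  have hq0 : (0:ℝ) < q := by linarith
  set F := cubeExpect fun x => u x ^ q with hF
  set A1 := cubeExpect (fun x => u x ^ q * Real.log (u x)) with hA1
  set A2 := cubeExpect (fun x => u x ^ q * Real.log (u x ^ q)) with hA2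
  set E3 := cubeExpect (fun x => u x ^ (q-1) * u' x) with hE3
  set D1 := dirichletForm u (fun x => u x ^ (q-1)) with hD1
  set w : (Fin n → Bool) → ℝ := fun x => u x ^ (q/2) with hw
  set D2 := dirichletForm w w with hD2
  -- integrand decomposition
  have hpt : ∀ x, u x ^ q * (qd * Real.log (u x) + q * (u' x / u x))
      = qd * (u x ^ q * Real.log (u x)) + q * (u x ^ (q-1) * u' x) := by
    intro x
    have h1 : u x ^ (q-1) = u x ^ q / u x := by
      rw [Real.rpow_sub (hu x), Real.rpow_one]
    rw [h1]
    have := (hu x).ne'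
    field_simp
  have hF' : cubeExpect (fun x => u x ^ q * (qd * Real.log (u x) + q * (u' x / u x)))
      = qd * A1 + q * E3 := by
    rw [hA1, hE3, ← cubeExpect_const_mul, ← cubeExpect_const_mul, ← cubeExpect_add]
    exact congrArg cubeExpect (funext hpt)
  -- A2 = q * A1
  have hA2q : A2 = q * A1 := by
    rw [hA2, hA1, ← cubeExpect_const_mul]
    refine congrArg cubeExpect (funext fun x => ?_)
    rw [Real.log_rpow (hu x)]
    ring
  -- E3 via Dirichlet form
  have hE3D : E3 = ((n:ℝ)/(2*r)) * D1 := by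
    rw [hE3, hD1, dirichletForm_eq, ← mul_assoc,
      show (n:ℝ)/(2*r) * (1/(n:ℝ)) = 1/(2*r) by field_simp, ← cubeExpect_const_mul]
    refine congrArg cubeExpect (funext fun x => ?_)
    rw [← Finset.sum_mul, hflip x]
    field_simp
  -- log-Sobolev for w
  have hw2 : (fun x => w x ^ 2) = fun x => u x ^ q := by
    funext x
    rw [hw]
    rw [← Real.rpow_natCast (u x ^ (q/2)) 2, ← Real.rpow_mul (hu x).le]
    norm_num
  have hLSw : α * (A2 - F * Real.log F) ≤ D2 := by
    have h := hLS w
    rw [hw2] at h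
    have hENT : cubeEntropy (fun x => u x ^ q) = A2 - F * Real.log F := by
      unfold cubeEntropy
      rw [hA2, hF]
    rwa [hENT] at h
  -- Stroock-Varopoulos comparison
  have hsv : 4*(q-1)/q^2 * D2 ≤ D1 := dirichlet_sv hn hq2 hu
  -- assemble
  have hkey : q * (qd * A1 + q * E3) - qd * F * Real.log F
      = qd * (A2 - F * Real.log F) + q^2 * E3 := by
    rw [hA2q]; ring
  rw [hF', hkey, hE3D]
  have hm1 : q^2 * (((n:ℝ)/(2*r)) * (4*(q-1)/q^2 * D2)) ≤ q^2 * (((n:ℝ)/(2*r)) * D1) := by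
    apply mul_le_mul_of_nonneg_left _ (by positivity)
    exact mul_le_mul_of_nonneg_left hsv (by positivity)
  have hm2 : q^2 * (((n:ℝ)/(2*r)) * (4*(q-1)/q^2 * D2)) = (2*(n:ℝ)*(q-1)/r) * D2 := by
    field_simp
    ring
  have hm3 : (2*(n:ℝ)*(q-1)/r) * (α * (A2 - F * Real.log F)) ≤ (2*(n:ℝ)*(q-1)/r) * D2 := by
    apply mul_le_mul_of_nonneg_left hLSw
    have : (0:ℝ) ≤ q - 1 := by linarith
    positivity
  have hqd' : qd = -(2*(n:ℝ)*(q-1)/r) * α := by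
    have h2 : r ^ (-c) = q - 1 := by rw [hq]; ring
    have h1 : r ^ (-c-1) = (q-1) / r := by
      rw [Real.rpow_sub hr0, Real.rpow_one, h2]
    rw [hqd, h1, hc]
    ring
  rw [hqd']
  nlinarith [hm1, hm2, hm3]

end Core

-- ## Layer 5 : derivatives in the noise parameter and the main monotonicity

section Main
variable {n : ℕ}

def Uder (g : (Fin n → Bool) → ℝ) (r : ℝ) (x : Fin n → Bool) : ℝ :=
  ∑ S : Finset (Fin n), (S.card : ℝ) * r ^ (S.card - 1) * fourierCoef g S * chi S x

lemma hasDerivAt_noiseOp (g : (Fin n → Bool) → ℝ) (x : Fin n → Bool) (r : ℝ) :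
    HasDerivAt (fun r => noiseOp r g x) (Uder g r x) r := by
  unfold noiseOp Uder
  apply HasDerivAt.fun_sum
  intro S _
  exact ((hasDerivAt_pow S.card r).mul_const (fourierCoef g S)).mul_const (chi S x)

lemma flip_sum (g : (Fin n → Bool) → ℝ) (r : ℝ) (x : Fin n → Bool) :
    ∑ i, (noiseOp r g x - noiseOp r g (flipAt x i)) = 2 * r * Uder g r x := by
  have expand : ∀ i, noiseOp r g x - noiseOp r g (flipAt x i)
      = ∑ S : Finset (Fin n), (if i ∈ S then (2:ℝ) else 0)
          * (r ^ S.card * fourierCoef g S * chi S x) := by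
    intro i
    unfold noiseOp
    rw [← Finset.sum_sub_distrib]
    refine Finset.sum_congr rfl fun S _ => ?_
    rw [chi_flipAt]
    by_cases hiS : i ∈ S
    · rw [if_pos hiS, if_pos hiS]; ring
    · rw [if_neg hiS, if_neg hiS]; ring
  rw [Finset.sum_congr rfl fun i _ => expand i, Finset.sum_comm]
  unfold Uder
  rw [Finset.mul_sum]
  refine Finset.sum_congr rfl fun S _ => ?_
  rw [← Finset.sum_mul]
  have hcard : (∑ i, if i ∈ S then (2:ℝ) else 0) = 2 * S.card := by
    rw [Finset.sum_ite_mem, Finset.univ_inter, Finset.sum_const]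
    simp [mul_comm]
  rw [hcard]
  rcases Nat.eq_zero_or_pos S.card with h0 | hpos
  · rw [h0]; simp
  · have hr : r ^ (S.card - 1) * r = r ^ S.card := by
      rw [← pow_succ, Nat.sub_add_cancel hpos]
    rw [← hr]; ring

theorem main_pos (hn : 1 ≤ n) {α : ℝ} (hα : 0 < α)
    (hLS : ∀ f : (Fin n → Bool) → ℝ, α * cubeEntropy (fun x => f x ^ 2) ≤ dirichletForm f f)
    {ρ : ℝ} (hρ0 : 0 < ρ) (hρ1 : ρ ≤ 1)
    {g : (Fin n → Bool) → ℝ} {ε : ℝ} (hε : 0 < ε) (hg : ∀ x, ε ≤ g x) :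
    cubeNorm (1 + ρ ^ (-(2 * α * (n : ℝ)))) (noiseOp ρ g) ≤ cubeNorm 2 g := by
  have hn' : (0:ℝ) < n := by exact_mod_cast hn
  set c : ℝ := 2*α*(n:ℝ) with hc
  have hc0 : 0 < c := by rw [hc]; positivity
  set q : ℝ → ℝ := fun r => 1 + r ^ (-c) with hqdef
  set q' : ℝ → ℝ := fun r => -c * r ^ (-c-1) with hq'def
  set F : ℝ → ℝ := fun r => cubeExpect (fun x => noiseOp r g x ^ q r) with hFdef
  set F' : ℝ → ℝ := fun r => cubeExpect (fun x => noiseOp r g x ^ q r *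
      (q' r * Real.log (noiseOp r g x) + q r * (Uder g r x / noiseOp r g x))) with hF'def
  set Φ : ℝ → ℝ := fun r => Real.log (F r) / q r with hPhidef
  have hU : ∀ r, 0 ≤ r → r ≤ 1 → ∀ x, 0 < noiseOp r g x :=
    fun r h0 h1 x => lt_of_lt_of_le hε (noiseOp_ge h0 h1 hg x)
  have hq2 : ∀ r, 0 < r → r ≤ 1 → 2 ≤ q r := by
    intro r h0 h1
    have := Real.one_le_rpow_of_pos_of_le_one_of_nonpos h0 h1 (by linarith : -c ≤ 0)
    simp only [hqdef]
    linarith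
  have hFpos : ∀ r, 0 < r → r ≤ 1 → 0 < F r := by
    intro r h0 h1
    exact cubeExpect_pos fun x => Real.rpow_pos_of_pos (hU r h0.le h1 x) _
  have hDq : ∀ r : ℝ, 0 < r → HasDerivAt q (q' r) r := by
    intro r h0
    rw [hqdef, hq'def]
    exact (Real.hasDerivAt_rpow_const (p := -c) (Or.inl h0.ne')).const_add 1
  have hDF : ∀ r : ℝ, 0 < r → r ≤ 1 → HasDerivAt F (F' r) r := by
    intro r h0 h1
    have hDV : ∀ x, HasDerivAt (fun s => noiseOp s g x ^ q s)
        (noiseOp r g x ^ q r *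
          (q' r * Real.log (noiseOp r g x) + q r * (Uder g r x / noiseOp r g x))) r := by
      intro x
      have hux : 0 < noiseOp r g x := hU r h0.le h1 x
      have hev : ∀ᶠ s in 𝓝 r, 0 < noiseOp s g x :=
        (hasDerivAt_noiseOp g x r).continuousAt.eventually (eventually_gt_nhds hux)
      have heq : (fun s => noiseOp s g x ^ q s)
          =ᶠ[𝓝 r] fun s => Real.exp (q s * Real.log (noiseOp s g x)) := by
        filter_upwards [hev] with s hs
        rw [Real.rpow_def_of_pos hs, mul_comm]
      have hd1 : HasDerivAt (fun s => q s * Real.log (noiseOp s g x))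
          (q' r * Real.log (noiseOp r g x) + q r * (Uder g r x / noiseOp r g x)) r :=
        (hDq r h0).mul ((hasDerivAt_noiseOp g x r).log hux.ne')
      have hd2 := hd1.exp
      have hval : Real.exp (q r * Real.log (noiseOp r g x)) = noiseOp r g x ^ q r := by
        rw [Real.rpow_def_of_pos hux, mul_comm]
      rw [hval] at hd2
      exact hd2.congr_of_eventuallyEq heq
    rw [hFdef, hF'def]
    unfold cubeExpect
    exact (HasDerivAt.fun_sum (u := Finset.univ) (fun x _ => hDV x)).div_const ((2:ℝ)^n)
  have hDPhi : ∀ r : ℝ, 0 < r → r ≤ 1 →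
      HasDerivAt Φ ((F' r / F r * q r - Real.log (F r) * q' r) / q r ^ 2) r := by
    intro r h0 h1
    have hqne : q r ≠ 0 := by have := hq2 r h0 h1; intro h; rw [h] at this; linarith
    exact ((hDF r h0 h1).log (hFpos r h0 h1).ne').div (hDq r h0) hqne
  have hderiv_nonneg : ∀ r : ℝ, 0 < r → r ≤ 1 →
      0 ≤ (F' r / F r * q r - Real.log (F r) * q' r) / q r ^ 2 := by
    intro r h0 h1
    have hcore := core_ineq hn hα hLS h0 h1 (hU r h0.le h1) (flip_sum g r) hc rfl rfl
    have hFr := hFpos r h0 h1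
    have hnum : F' r / F r * q r - Real.log (F r) * q' r
        = (q r * F' r - q' r * F r * Real.log (F r)) / F r := by
      field_simp
    rw [hnum]
    apply div_nonneg _ (sq_nonneg _)
    apply div_nonneg _ hFr.le
    exact hcore
  -- monotonicity of Φ on [ρ, 1]
  have hmono : MonotoneOn Φ (Set.Icc ρ 1) := by
    apply monotoneOn_of_deriv_nonneg (convex_Icc ρ 1)
    · intro r hr
      exact (hDPhi r (lt_of_lt_of_le hρ0 hr.1) hr.2).continuousAt.continuousWithinAt
    · intro r hr
      rw [interior_Icc] at hr
      exact (hDPhi r (lt_of_lt_of_le hρ0 hr.1.le) hr.2.le).differentiableAt.differentiableWithinAt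
    · intro r hr
      rw [interior_Icc] at hr
      rw [(hDPhi r (lt_of_lt_of_le hρ0 hr.1.le) hr.2.le).deriv]
      exact hderiv_nonneg r (lt_of_lt_of_le hρ0 hr.1.le) hr.2.le
  have hPhile : Φ ρ ≤ Φ 1 :=
    hmono (Set.mem_Icc.mpr ⟨le_refl ρ, hρ1⟩) (Set.mem_Icc.mpr ⟨hρ1, le_refl 1⟩) hρ1
  -- identify endpoints
  have hexp : ∀ r, 0 < r → r ≤ 1 → F r ^ (1 / q r) = Real.exp (Φ r) := by
    intro r h0 h1
    rw [Real.rpow_def_of_pos (hFpos r h0 h1), hPhidef]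
    simp only
    rw [mul_one_div]
  have hq1 : q 1 = 2 := by
    rw [hqdef]
    norm_num
  have hnormρ : cubeNorm (q ρ) (noiseOp ρ g) = F ρ ^ (1 / q ρ) := by
    unfold cubeNorm
    congr 2
    funext x
    rw [abs_of_pos (hU ρ hρ0.le hρ1 x)]
  have hnorm2 : cubeNorm 2 g = F 1 ^ (1 / q 1) := by
    have hF1 : F 1 = cubeExpect fun x => |g x| ^ (2:ℝ) := by
      rw [hFdef]
      simp only
      rw [hq1]
      exact congrArg cubeExpect (funext fun x => by
        rw [noiseOp_one, abs_of_pos (lt_of_lt_of_le hε (hg x))])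
    rw [hF1, hq1]
    rfl
  have final : cubeNorm (q ρ) (noiseOp ρ g) ≤ cubeNorm 2 g := by
    rw [hnormρ, hnorm2, hexp ρ hρ0 hρ1, hexp 1 one_pos le_rfl]
    exact Real.exp_le_exp.mpr hPhile
  exact final

end Main

-- ## Final theorem

lemma cubeExpect_nonneg {n : ℕ} {f : (Fin n → Bool) → ℝ} (h : ∀ x, 0 ≤ f x) :
    0 ≤ cubeExpect f :=
  div_nonneg (Finset.sum_nonneg fun x _ => h x) (by positivity)


/-- **Gross's theorem (log-Sobolev implies hypercontractivity), `p = 2` case**: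
if `α > 0` is such that `D(f,f) ≥ α·Ent(f²)` for every `f : {-1,1}^n → ℝ`, then for every
`ρ ∈ (0,1]` and `q = 1 + ρ^{−2αn}` one has `‖T_ρ f‖_q ≤ ‖f‖₂` for every `f`. -/
theorem logSobolev_implies_hypercontractivity (n : ℕ) (hn : 1 ≤ n) (α : ℝ) (hα : 0 < α)
    (hLS : ∀ f : (Fin n → Bool) → ℝ, α * cubeEntropy (fun x => f x ^ 2) ≤ dirichletForm f f) :
    ∀ ρ : ℝ, 0 < ρ → ρ ≤ 1 → ∀ f : (Fin n → Bool) → ℝ,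
      cubeNorm (1 + ρ ^ (-(2 * α * (n : ℝ)))) (noiseOp ρ f) ≤ cubeNorm 2 f := by
  intro ρ hρ0 hρ1 f
  have hn' : (0:ℝ) < n := by exact_mod_cast hn
  set p : ℝ := 1 + ρ ^ (-(2 * α * (n:ℝ))) with hp
  have hρc : 1 ≤ ρ ^ (-(2 * α * (n:ℝ))) :=
    Real.one_le_rpow_of_pos_of_le_one_of_nonpos hρ0 hρ1 (by nlinarith)
  have hp0 : 0 < p := by rw [hp]; linarith
  have key : ∀ ε : ℝ, 0 < ε → cubeNorm p (noiseOp ρ f)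
      ≤ (cubeExpect (fun x => (|f x| + ε)^2))^(1/(2:ℝ)) := by
    intro ε hε
    set g : (Fin n → Bool) → ℝ := fun x => |f x| + ε with hgdef
    have hg : ∀ x, ε ≤ g x := fun x => le_add_of_nonneg_left (abs_nonneg _)
    have habs : ∀ x, |f x| ≤ g x := fun x => le_add_of_nonneg_right hε.le
    have h1 : cubeNorm p (noiseOp ρ f) ≤ cubeNorm p (noiseOp ρ g) := by
      unfold cubeNorm
      apply Real.rpow_le_rpow (cubeExpect_nonneg fun x => by positivity)
        (cubeExpect_mono fun x => ?_) (by positivity)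
      apply Real.rpow_le_rpow (abs_nonneg _) _ hp0.le
      exact (abs_noiseOp_le hρ0.le hρ1 habs x).trans (le_abs_self _)
    have h2 : cubeNorm p (noiseOp ρ g) ≤ cubeNorm 2 g :=
      main_pos hn hα hLS hρ0 hρ1 hε hg
    have h3 : cubeNorm 2 g = (cubeExpect (fun x => (|f x| + ε)^2))^(1/(2:ℝ)) := by
      unfold cubeNorm
      congr 1
      refine congrArg cubeExpect (funext fun x => ?_)
      rw [abs_of_pos (lt_of_lt_of_le hε (hg x)),
        show ((2:ℝ)) = ((2:ℕ):ℝ) by norm_num, Real.rpow_natCast]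
    calc cubeNorm p (noiseOp ρ f) ≤ cubeNorm p (noiseOp ρ g) := h1
      _ ≤ cubeNorm 2 g := h2
      _ = _ := h3
  have hcont : Tendsto (fun ε : ℝ => (cubeExpect (fun x => (|f x| + ε)^2))^(1/(2:ℝ)))
      (𝓝[>] (0:ℝ)) (𝓝 (cubeNorm 2 f)) := by
    have h0 : cubeNorm 2 f = (cubeExpect (fun x => (|f x| + 0)^2))^(1/(2:ℝ)) := by
      unfold cubeNorm
      congr 1
      refine congrArg cubeExpect (funext fun x => ?_)
      rw [add_zero, show ((2:ℝ)) = ((2:ℕ):ℝ) by norm_num, Real.rpow_natCast]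
    rw [h0]
    have hinner : Continuous (fun ε : ℝ => cubeExpect (fun x => (|f x| + ε)^2)) := by
      unfold cubeExpect
      apply Continuous.div_const
      apply continuous_finset_sum
      intro x _
      exact ((continuous_const.add continuous_id).pow 2)
    have houter : ContinuousAt (fun y : ℝ => y ^ (1/(2:ℝ)))
        (cubeExpect (fun x => (|f x| + 0)^2)) :=
      Real.continuousAt_rpow_const _ _ (Or.inr (by norm_num))
    exact (houter.tendsto.comp (hinner.continuousAt (x := (0:ℝ)))).mono_left nhdsWithin_le_nhds
  exact ge_of_tendsto hcont
    (eventually_nhdsWithin_of_forall (fun ε hε => key ε hε))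
end
end

section
/- For all real numbers a > b ≥ 0 and every real q ≥ 2, one has (a^{q−1} − b^{q−1})(a − b) ≥ (4(q−1)/q²) · (a^{q/2} − b^{q/2})². -/
open intervalIntegral MeasureTheory

/-- Cauchy–Schwarz for interval integrals with weight 1. -/
lemma cs_interval (f : ℝ → ℝ) (hf : Continuous f) {b a : ℝ} (hba : b < a) :
    (∫ t in b..a, f t) ^ 2 ≤ (a - b) * ∫ t in b..a, f t ^ 2 := by
  set I := ∫ t in b..a, f t with hI
  set S := ∫ t in b..a, f t ^ 2 with hS
  have hint : IntervalIntegrable f volume b a := hf.intervalIntegrable _ _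
  have hint2 : IntervalIntegrable (fun t => f t ^ 2) volume b a :=
    (hf.pow 2).intervalIntegrable _ _
  have key : 0 ≤ ∫ t in b..a, ((a - b) * f t - I) ^ 2 :=
    intervalIntegral.integral_nonneg hba.le (fun t _ => sq_nonneg _)
  have expand : (∫ t in b..a, ((a - b) * f t - I) ^ 2)
      = (a - b) ^ 2 * S - 2 * (a - b) * I * I + I ^ 2 * (a - b) := by
    have heq : (fun t => ((a - b) * f t - I) ^ 2)
        = fun t => (a - b) ^ 2 * f t ^ 2 - (2 * (a - b) * I) * f t + I ^ 2 := by
      funext t; ring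
    rw [heq,
      intervalIntegral.integral_add ((hint2.const_mul _).sub (hint.const_mul _))
        intervalIntegrable_const,
      intervalIntegral.integral_sub (hint2.const_mul _) (hint.const_mul _),
      intervalIntegral.integral_const_mul, intervalIntegral.integral_const_mul,
      intervalIntegral.integral_const]
    simp only [smul_eq_mul, ← hI, ← hS]
    ring
  rw [expand] at key
  nlinarith [sq_nonneg (a - b), hba]

/-- **Pointwise convexity inequality**: for real `a > b ≥ 0` and `q ≥ 2`,
`(a^{q−1} − b^{q−1})(a − b) ≥ (4(q−1)/q²)(a^{q/2} − b^{q/2})²`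
(real powers of nonnegative reals). -/
theorem pow_diff_mul_diff_ge (a b q : ℝ) (hb : 0 ≤ b) (hab : b < a) (hq : 2 ≤ q) :
    (4 * (q - 1) / q ^ 2) * (a ^ (q / 2) - b ^ (q / 2)) ^ 2 ≤
      (a ^ (q - 1) - b ^ (q - 1)) * (a - b) := by
  set p := q / 2 with hp
  have hp1 : (1 : ℝ) ≤ p := by rw [hp]; linarith
  have hp0 : (0 : ℝ) < p := by linarith
  have hq1 : (0 : ℝ) < q - 1 := by linarith
  have hf : Continuous (fun t : ℝ => t ^ (p - 1)) := by
    apply continuous_iff_continuousAt.2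
    intro x
    exact Real.continuousAt_rpow_const x _ (Or.inr (by linarith))
  have hI1 : (∫ t in b..a, t ^ (p - 1)) = (a ^ p - b ^ p) / p := by
    rw [integral_rpow (Or.inl (by linarith))]
    norm_num
  have hcongr : Set.EqOn (fun t : ℝ => (t ^ (p - 1)) ^ 2)
      (fun t : ℝ => t ^ ((p - 1) * 2)) (Set.uIcc b a) := by
    intro t ht
    rw [Set.uIcc_of_le hab.le] at ht
    have ht0 : 0 ≤ t := le_trans hb ht.1
    simp only
    rw [← Real.rpow_natCast (t ^ (p - 1)) 2, ← Real.rpow_mul ht0]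
    norm_num
  have hI2 : (∫ t in b..a, (t ^ (p - 1)) ^ 2) = (a ^ (q - 1) - b ^ (q - 1)) / (q - 1) := by
    rw [intervalIntegral.integral_congr hcongr,
      integral_rpow (Or.inl (by nlinarith))]
    have h1 : (p - 1) * 2 + 1 = q - 1 := by rw [hp]; ring
    rw [h1]
  have hcs := cs_interval (fun t : ℝ => t ^ (p - 1)) hf hab
  rw [hI1, hI2] at hcs
  have hkey : (q - 1) * (a ^ p - b ^ p) ^ 2 ≤ p ^ 2 * ((a - b) * (a ^ (q - 1) - b ^ (q - 1))) := by
    rw [div_pow, div_le_iff₀ (show (0 : ℝ) < p ^ 2 by positivity)] at hcs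
    have h := mul_le_mul_of_nonneg_left hcs hq1.le
    have e : (q - 1) * ((a - b) * ((a ^ (q - 1) - b ^ (q - 1)) / (q - 1)) * p ^ 2)
        = p ^ 2 * ((a - b) * (a ^ (q - 1) - b ^ (q - 1))) := by
      field_simp
    rw [e] at h
    linarith
  have hq2 : q ^ 2 = 4 * p ^ 2 := by rw [hp]; ring
  rw [hq2, div_mul_eq_mul_div, div_le_iff₀ (by positivity)]
  nlinarith [hkey]
end

section
/- (Kahn–Kalai–Linial / Talagrand) There exists a universal constant c > 0 such that for every n ≥ 1 and every f : {-1,1}^n → {-1,1}, Σ_{i=1}^n Inf_i(f)/log(e/Inf_i(f)) ≥ c·Var(f), where any term with Inf_i(f) = 0 is interpreted as 0. -/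
noncomputable section

namespace KKL
open Finset Real

variable {n : ℕ}


lemma sgn_mul_self (b : Bool) : sgn b * sgn b = 1 := by cases b <;> simp [sgn]

lemma sgn_not (b : Bool) : sgn (!b) = - sgn b := by cases b <;> simp [sgn]

lemma chi_mul_self (S : Finset (Fin n)) (x : Fin n → Bool) : chi S x * chi S x = 1 := by
  rw [chi, ← Finset.prod_mul_distrib]
  exact Finset.prod_eq_one fun i _ => sgn_mul_self _

lemma flipAt_apply (x : Fin n → Bool) (j i : Fin n) :
    flipAt x j i = if i = j then !(x j) else x i := by
  simp [flipAt, Function.update]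

lemma flipAt_flipAt (x : Fin n → Bool) (j : Fin n) : flipAt (flipAt x j) j = x := by
  funext i
  by_cases h : i = j <;> simp [flipAt_apply, h]

lemma flipAt_involutive (j : Fin n) : Function.Involutive (flipAt · j) :=
  fun x => flipAt_flipAt x j

/-- Sum over the cube is invariant under reindexing by a flip. -/
lemma sum_flip (j : Fin n) (F : (Fin n → Bool) → ℝ) :
    ∑ x : Fin n → Bool, F (flipAt x j) = ∑ x : Fin n → Bool, F x :=
  Equiv.sum_comp ((flipAt_involutive j).toPerm) F

lemma sum_eq_zero_of_flip_neg {F : (Fin n → Bool) → ℝ} (j : Fin n)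
    (h : ∀ x, F (flipAt x j) = -F x) : ∑ x : Fin n → Bool, F x = 0 := by
  have h1 := sum_flip j F
  simp only [h, Finset.sum_neg_distrib] at h1
  linarith

lemma chi_flipAt (S : Finset (Fin n)) (x : Fin n → Bool) (j : Fin n) :
    chi S (flipAt x j) = (if j ∈ S then -1 else 1) * chi S x := by
  have : ∀ i ∈ S, sgn (flipAt x j i) = (if i = j then (-1:ℝ) else 1) * sgn (x i) := by
    intro i _
    rcases eq_or_ne i j with rfl | hne
    · simp [flipAt_apply, sgn_not]
    · simp [flipAt_apply, hne]
  rw [chi, Finset.prod_congr rfl this, Finset.prod_mul_distrib, Finset.prod_ite_eq' S j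
    (fun _ => (-1:ℝ))]
  rfl


lemma two_pow_pos : (0:ℝ) < 2 ^ n := by positivity

lemma cubeExpect_const (c : ℝ) : cubeExpect (fun _ : Fin n → Bool => c) = c := by
  rw [cubeExpect, Finset.sum_const, Finset.card_univ]
  simp only [Fintype.card_fun, Fintype.card_bool, Fintype.card_fin, nsmul_eq_mul]
  push_cast
  field_simp

lemma cubeExpect_sum {ι : Type*} (s : Finset ι) (F : ι → (Fin n → Bool) → ℝ) :
    cubeExpect (fun x => ∑ k ∈ s, F k x) = ∑ k ∈ s, cubeExpect (F k) := by
  simp only [cubeExpect, ← Finset.sum_div]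
  rw [Finset.sum_comm]

lemma cubeExpect_const_mul (c : ℝ) (F : (Fin n → Bool) → ℝ) :
    cubeExpect (fun x => c * F x) = c * cubeExpect F := by
  simp only [cubeExpect, ← Finset.mul_sum, mul_div_assoc]

lemma cubeExpect_nonneg {F : (Fin n → Bool) → ℝ} (h : ∀ x, 0 ≤ F x) :
    0 ≤ cubeExpect F :=
  div_nonneg (Finset.sum_nonneg fun x _ => h x) (le_of_lt two_pow_pos)

lemma cubeExpect_mono {F H : (Fin n → Bool) → ℝ} (h : ∀ x, F x ≤ H x) :
    cubeExpect F ≤ cubeExpect H :=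
  div_le_div_of_nonneg_right (Finset.sum_le_sum fun x _ => h x) two_pow_pos.le

/-- Orthogonality of characters. -/
lemma expect_chi_mul_chi (S T : Finset (Fin n)) :
    cubeExpect (fun x => chi S x * chi T x) = if S = T then 1 else 0 := by
  rcases eq_or_ne S T with rfl | hST
  · simp only [if_pos rfl]
    rw [show (fun x => chi S x * chi S x) = fun _ => (1:ℝ) from funext fun x => chi_mul_self S x]
    exact cubeExpect_const 1
  · rw [if_neg hST]
    obtain ⟨j, hj⟩ : ∃ j, (j ∈ S ∧ j ∉ T) ∨ (j ∈ T ∧ j ∉ S) := by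
      by_contra hcon
      push_neg at hcon
      apply hST
      ext j
      exact ⟨(hcon j).1, (hcon j).2⟩
    have hneg : ∀ x, chi S (flipAt x j) * chi T (flipAt x j) = -(chi S x * chi T x) := by
      intro x
      rw [chi_flipAt, chi_flipAt]
      rcases hj with ⟨h1, h2⟩ | ⟨h1, h2⟩ <;> simp [h1, h2] <;> ring
    rw [cubeExpect, sum_eq_zero_of_flip_neg j hneg, zero_div]

/-- Synthesis operator: function with Fourier coefficients `a`. -/
def G (a : Finset (Fin n) → ℝ) (x : Fin n → Bool) : ℝ :=
  ∑ S : Finset (Fin n), a S * chi S x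

lemma expect_G_mul_G (a b : Finset (Fin n) → ℝ) :
    cubeExpect (fun x => G a x * G b x) = ∑ S : Finset (Fin n), a S * b S := by
  have : ∀ x, G a x * G b x
      = ∑ S : Finset (Fin n), ∑ T : Finset (Fin n), a S * b T * (chi S x * chi T x) := by
    intro x
    rw [G, G, Finset.sum_mul_sum]
    exact Finset.sum_congr rfl fun S _ => Finset.sum_congr rfl fun T _ => by ring
  rw [show (fun x => G a x * G b x) = _ from funext this, cubeExpect_sum]
  refine Finset.sum_congr rfl fun S _ => ?_
  rw [cubeExpect_sum]
  rw [Finset.sum_eq_single S]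
  · rw [cubeExpect_const_mul, expect_chi_mul_chi, if_pos rfl, mul_one]
  · intro T _ hT
    rw [cubeExpect_const_mul, expect_chi_mul_chi, if_neg (Ne.symm hT), mul_zero]
  · intro h; exact absurd (Finset.mem_univ S) h

/-- `E[F · G c] = Σ c S F̂(S)`. -/
lemma expect_mul_G (F : (Fin n → Bool) → ℝ) (c : Finset (Fin n) → ℝ) :
    cubeExpect (fun x => F x * G c x) = ∑ S : Finset (Fin n), c S * fourierCoef F S := by
  have : ∀ x, F x * G c x = ∑ S : Finset (Fin n), c S * (F x * chi S x) := by
    intro x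
    rw [G, Finset.mul_sum]
    exact Finset.sum_congr rfl fun S _ => by ring
  rw [show (fun x => F x * G c x) = _ from funext this, cubeExpect_sum]
  exact Finset.sum_congr rfl fun S _ => cubeExpect_const_mul _ _


/-- Fourier inversion: every function equals its Fourier expansion. -/
lemma G_fourierCoef (f : (Fin n → Bool) → ℝ) (x : Fin n → Bool) :
    G (fourierCoef f) x = f x := by
  have key : ∀ y : Fin n → Bool,
      (∑ S : Finset (Fin n), chi S y * chi S x) = if y = x then (2:ℝ)^n else 0 := by
    intro y
    have h1 : (∑ S : Finset (Fin n), chi S y * chi S x)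
        = ∑ S ∈ (Finset.univ : Finset (Fin n)).powerset, (∏ i ∈ S, sgn (y i) * sgn (x i)) * ∏ i ∈ Finset.univ \ S, (1:ℝ) := by
      rw [Finset.powerset_univ]
      refine Finset.sum_congr rfl fun S _ => ?_
      rw [chi, chi, ← Finset.prod_mul_distrib, Finset.prod_const_one, mul_one]
    rw [h1, ← Finset.prod_add]
    rcases eq_or_ne y x with rfl | hyx
    · rw [if_pos rfl]
      have : ∀ i ∈ (Finset.univ : Finset (Fin n)), sgn (y i) * sgn (y i) + 1 = 2 := by
        intro i _; rw [sgn_mul_self]; norm_num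
      rw [Finset.prod_congr rfl this, Finset.prod_const, Finset.card_univ, Fintype.card_fin]
    · rw [if_neg hyx]
      obtain ⟨j, hj⟩ : ∃ j, y j ≠ x j := by
        by_contra hc; push_neg at hc; exact hyx (funext hc)
      apply Finset.prod_eq_zero (Finset.mem_univ j)
      cases hy : y j <;> cases hx : x j <;> simp_all [sgn]
  have h2 : G (fourierCoef f) x
      = (∑ y : Fin n → Bool, f y * ∑ S : Finset (Fin n), chi S y * chi S x) / 2^n := by
    rw [G]
    simp only [fourierCoef, cubeExpect, Finset.sum_div, Finset.mul_sum, Finset.sum_mul]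
    rw [Finset.sum_comm]
    refine Finset.sum_congr rfl fun y _ => Finset.sum_congr rfl fun S _ => ?_
    field_simp
  rw [h2]
  simp only [key, mul_ite, mul_zero]
  rw [Finset.sum_ite_eq' Finset.univ x (fun y => f y * 2^n), if_pos (Finset.mem_univ x)]
  field_simp

/-- Plancherel / Parseval. -/
lemma expect_mul_eq_sum_fourier (f h : (Fin n → Bool) → ℝ) :
    cubeExpect (fun x => f x * h x) = ∑ S : Finset (Fin n), fourierCoef f S * fourierCoef h S := by
  have : (fun x => f x * h x) = fun x => f x * G (fourierCoef h) x := by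
    funext x; rw [G_fourierCoef]
  rw [this, expect_mul_G]
  exact Finset.sum_congr rfl fun S _ => mul_comm _ _

lemma parseval (f : (Fin n → Bool) → ℝ) :
    cubeExpect (fun x => f x ^ 2) = ∑ S : Finset (Fin n), fourierCoef f S ^ 2 := by
  have := expect_mul_eq_sum_fourier f f
  simp only [← sq] at this
  exact this

lemma fourierCoef_empty (f : (Fin n → Bool) → ℝ) :
    fourierCoef f ∅ = cubeExpect f := by
  simp [fourierCoef, chi]


/-- Reindex sums over sets containing `j` by sets not containing `j`. -/
lemma sum_insert_reindex (j : Fin n) (F : Finset (Fin n) → ℝ) :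
    ∑ S ∈ Finset.univ.filter (fun S : Finset (Fin n) => j ∈ S), F S
      = ∑ S ∈ Finset.univ.filter (fun S : Finset (Fin n) => j ∉ S), F (insert j S) := by
  apply Finset.sum_nbij' (fun S => S.erase j) (fun S => insert j S)
  · intro S hS
    simp only [Finset.mem_filter, Finset.mem_univ, true_and] at hS ⊢
    exact Finset.notMem_erase j S
  · intro S hS
    simp only [Finset.mem_filter, Finset.mem_univ, true_and] at hS ⊢
    exact Finset.mem_insert_self j S
  · intro S hS
    simp only [Finset.mem_filter, Finset.mem_univ, true_and] at hS
    exact Finset.insert_erase hS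
  · intro S hS
    simp only [Finset.mem_filter, Finset.mem_univ, true_and] at hS
    exact Finset.erase_insert hS
  · intro S hS
    simp only [Finset.mem_filter, Finset.mem_univ, true_and] at hS
    rw [Finset.insert_erase hS]

lemma sum_split (j : Fin n) (F : Finset (Fin n) → ℝ) :
    ∑ S : Finset (Fin n), F S
      = ∑ S ∈ Finset.univ.filter (fun S : Finset (Fin n) => j ∉ S), F S
        + ∑ S ∈ Finset.univ.filter (fun S : Finset (Fin n) => j ∉ S), F (insert j S) := by
  rw [← sum_insert_reindex j F]
  rw [← Finset.sum_filter_add_sum_filter_not Finset.univ (fun S : Finset (Fin n) => j ∈ S) F]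
  ring

/-- If the coefficients avoid `j` then `G` does not depend on coordinate `j`. -/
lemma G_flipAt_of_not_mem {j : Fin n} {d : Finset (Fin n) → ℝ}
    (hd : ∀ S, j ∈ S → d S = 0) (x : Fin n → Bool) :
    G d (flipAt x j) = G d x := by
  rw [G, G]
  refine Finset.sum_congr rfl fun S _ => ?_
  by_cases hj : j ∈ S
  · rw [hd S hj]; ring
  · rw [chi_flipAt, if_neg hj, one_mul]

lemma expect_sgn_mul (j : Fin n) {P : (Fin n → Bool) → ℝ}
    (hP : ∀ x, P (flipAt x j) = P x) :
    cubeExpect (fun x => sgn (x j) * P x) = 0 := by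
  rw [cubeExpect, sum_eq_zero_of_flip_neg j, zero_div]
  intro x
  rw [hP]
  have : flipAt x j j = !(x j) := by simp [flipAt_apply]
  rw [this, sgn_not]
  ring

set_option maxHeartbeats 2000000 in
/-- Bonami's lemma, by induction on the set of allowed coordinates. -/
lemma bonami_aux (ρ : ℝ) (hρ : ρ^2 ≤ 1/3) (J : Finset (Fin n)) :
    ∀ a : Finset (Fin n) → ℝ, (∀ S, ¬ S ⊆ J → a S = 0) →
      cubeExpect (fun x => (G (fun S => ρ^S.card * a S) x)^4)
        ≤ (∑ S : Finset (Fin n), a S ^ 2)^2 := by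
  induction J using Finset.induction_on with
  | empty =>
    intro a ha
    have hG : ∀ x, G (fun S => ρ^S.card * a S) x = a ∅ := by
      intro x
      rw [G, Finset.sum_eq_single ∅]
      · simp [chi]
      · intro T _ hT
        rw [ha T (by simpa using hT)]
        ring
      · intro h; exact absurd (Finset.mem_univ ∅) h
    have hsum : ∑ S : Finset (Fin n), a S ^ 2 = a ∅ ^ 2 := by
      rw [Finset.sum_eq_single ∅]
      · intro T _ hT
        rw [ha T (by simpa using hT)]; ring
      · intro h; exact absurd (Finset.mem_univ ∅) h
    simp only [hG, hsum]
    rw [cubeExpect_const]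
    ring_nf
    exact le_refl _
  | @insert j J hjJ ih =>
    intro a ha
    set b : Finset (Fin n) → ℝ := fun S => if j ∈ S then 0 else a S with hb
    set c : Finset (Fin n) → ℝ := fun S => if j ∈ S then 0 else a (insert j S) with hc
    set B : (Fin n → Bool) → ℝ := G (fun S => ρ^S.card * b S) with hB
    set C : (Fin n → Bool) → ℝ := G (fun S => ρ^S.card * c S) with hC
    -- decomposition
    have hdecomp : ∀ x, G (fun S => ρ^S.card * a S) x = B x + ρ * sgn (x j) * C x := by
      intro x
      have hBx : B x = ∑ S ∈ Finset.univ.filter (fun S : Finset (Fin n) => j ∉ S),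
          ρ^S.card * a S * chi S x := by
        rw [hB, G, sum_split j]
        have h0 : ∑ S ∈ Finset.univ.filter (fun S : Finset (Fin n) => j ∉ S),
            ρ^(insert j S).card * b (insert j S) * chi (insert j S) x = 0 := by
          apply Finset.sum_eq_zero
          intro S _
          rw [hb]
          simp [Finset.mem_insert_self j S]
        rw [h0, add_zero]
        refine Finset.sum_congr rfl fun S hS => ?_
        simp only [Finset.mem_filter, Finset.mem_univ, true_and] at hS
        rw [hb]
        simp [hS]
      have hCx : C x = ∑ S ∈ Finset.univ.filter (fun S : Finset (Fin n) => j ∉ S),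
          ρ^S.card * a (insert j S) * chi S x := by
        rw [hC, G, sum_split j]
        have h0 : ∑ S ∈ Finset.univ.filter (fun S : Finset (Fin n) => j ∉ S),
            ρ^(insert j S).card * c (insert j S) * chi (insert j S) x = 0 := by
          apply Finset.sum_eq_zero
          intro S _
          rw [hc]
          simp [Finset.mem_insert_self j S]
        rw [h0, add_zero]
        refine Finset.sum_congr rfl fun S hS => ?_
        simp only [Finset.mem_filter, Finset.mem_univ, true_and] at hS
        rw [hc]
        simp [hS]
      rw [G, sum_split j, hBx, hCx, Finset.mul_sum]
      congr 1
      refine Finset.sum_congr rfl fun S hS => ?_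
      simp only [Finset.mem_filter, Finset.mem_univ, true_and] at hS
      rw [Finset.card_insert_of_notMem hS, chi, Finset.prod_insert hS, ← chi]
      ring
    -- invariance of B and C under flipping coordinate j
    have hBflip : ∀ x, B (flipAt x j) = B x := by
      intro x
      apply G_flipAt_of_not_mem
      intro S hS
      rw [hb]; simp [hS]
    have hCflip : ∀ x, C (flipAt x j) = C x := by
      intro x
      apply G_flipAt_of_not_mem
      intro S hS
      rw [hc]; simp [hS]
    -- pointwise expansion
    have hpt : ∀ x, (G (fun S => ρ^S.card * a S) x)^4
        = ((B x)^4 + 6*ρ^2*((B x)^2*(C x)^2) + ρ^4*(C x)^4)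
          + sgn (x j) * (4*ρ*(B x)^3*(C x) + 4*ρ^3*(B x)*(C x)^3) := by
      intro x
      rw [hdecomp x]
      have hε : sgn (x j) ^ 2 = 1 := by rw [sq]; exact sgn_mul_self _
      linear_combination (6*(B x)^2*ρ^2*(C x)^2 + 4*(B x)*ρ^3*(C x)^3*(sgn (x j))
        + ρ^4*(C x)^4*((sgn (x j))^2+1)) * hε
    -- expectation splits
    have hzero : ∑ x : Fin n → Bool,
        sgn (x j) * (4*ρ*(B x)^3*(C x) + 4*ρ^3*(B x)*(C x)^3) = 0 := by
      apply sum_eq_zero_of_flip_neg j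
      intro x
      rw [hBflip, hCflip, show flipAt x j j = !(x j) from by simp [flipAt_apply], sgn_not]
      ring
    have hEsplit : cubeExpect (fun x => (G (fun S => ρ^S.card * a S) x)^4)
        = cubeExpect (fun x => (B x)^4) + 6*ρ^2 * cubeExpect (fun x => ((B x)^2*(C x)^2))
          + ρ^4 * cubeExpect (fun x => (C x)^4) := by
      simp only [cubeExpect]
      rw [Finset.sum_congr rfl (fun x _ => hpt x), Finset.sum_add_distrib, hzero, add_zero,
        Finset.sum_add_distrib, Finset.sum_add_distrib, ← Finset.mul_sum, ← Finset.mul_sum]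
      field_simp
    set p := ∑ S : Finset (Fin n), b S ^ 2 with hp
    set q := ∑ S : Finset (Fin n), c S ^ 2 with hq
    have hp0 : 0 ≤ p := Finset.sum_nonneg fun S _ => sq_nonneg _
    have hq0 : 0 ≤ q := Finset.sum_nonneg fun S _ => sq_nonneg _
    have hbsupp : ∀ S, ¬ S ⊆ J → b S = 0 := by
      intro S hS
      rw [hb]
      by_cases hjS : j ∈ S
      · simp [hjS]
      · simp only [hjS, if_false]
        apply ha
        intro hcon
        exact hS ((Finset.subset_insert_iff_of_notMem hjS).mp hcon)
    have hcsupp : ∀ S, ¬ S ⊆ J → c S = 0 := by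
      intro S hS
      rw [hc]
      by_cases hjS : j ∈ S
      · simp [hjS]
      · simp only [hjS, if_false]
        apply ha
        intro hcon
        exact hS ((Finset.subset_insert_iff_of_notMem hjS).mp
          ((Finset.subset_insert j S).trans hcon))
    have hIB : cubeExpect (fun x => (B x)^4) ≤ p^2 := ih b hbsupp
    have hIC : cubeExpect (fun x => (C x)^4) ≤ q^2 := ih c hcsupp
    have hEB4 : 0 ≤ cubeExpect (fun x => (B x)^4) := cubeExpect_nonneg fun x => by positivity
    have hEC4 : 0 ≤ cubeExpect (fun x => (C x)^4) := cubeExpect_nonneg fun x => by positivity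
    have hEBC : 0 ≤ cubeExpect (fun x => ((B x)^2*(C x)^2)) :=
      cubeExpect_nonneg fun x => by positivity
    -- Cauchy-Schwarz
    have hCS : (cubeExpect (fun x => ((B x)^2*(C x)^2)))^2
        ≤ cubeExpect (fun x => (B x)^4) * cubeExpect (fun x => (C x)^4) := by
      have key : (∑ x : Fin n → Bool, (B x)^2*(C x)^2)^2
          ≤ (∑ x : Fin n → Bool, (B x)^4) * ∑ x : Fin n → Bool, (C x)^4 := by
        calc (∑ x : Fin n → Bool, (B x)^2*(C x)^2)^2
            ≤ (∑ x : Fin n → Bool, ((B x)^2)^2) * ∑ x : Fin n → Bool, ((C x)^2)^2 :=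
              Finset.sum_mul_sq_le_sq_mul_sq _ _ _
          _ = (∑ x : Fin n → Bool, (B x)^4) * ∑ x : Fin n → Bool, (C x)^4 := by
              congr 1 <;> exact Finset.sum_congr rfl fun x _ => by ring
      have h2 : ((2:ℝ)^n * 2^n) = ((2:ℝ)^n)^2 := by ring
      rw [cubeExpect, cubeExpect, cubeExpect, div_mul_div_comm, h2, div_pow]
      gcongr
    have hBC : cubeExpect (fun x => ((B x)^2*(C x)^2)) ≤ p * q := by
      nlinarith [hIB, hIC, hEB4, hEC4, hEBC, hCS, mul_nonneg hp0 hq0,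
        mul_le_mul hIB hIC hEC4 (sq_nonneg p)]
    -- sum of squares splits
    have hsum : ∑ S : Finset (Fin n), a S ^ 2 = p + q := by
      have hbeq : p = ∑ S ∈ Finset.univ.filter (fun S : Finset (Fin n) => j ∉ S), a S ^ 2 := by
        rw [hp, ← Finset.sum_filter_add_sum_filter_not Finset.univ
          (fun S : Finset (Fin n) => j ∈ S) (fun S => b S ^ 2)]
        have h1 : ∑ S ∈ Finset.univ.filter (fun S : Finset (Fin n) => j ∈ S), b S ^ 2 = 0 := by
          apply Finset.sum_eq_zero
          intro S hS
          simp only [Finset.mem_filter, Finset.mem_univ, true_and] at hS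
          rw [hb]; simp [hS]
        rw [h1, zero_add]
        refine Finset.sum_congr rfl fun S hS => ?_
        simp only [Finset.mem_filter, Finset.mem_univ, true_and] at hS
        rw [hb]; simp [hS]
      have hceq : q = ∑ S ∈ Finset.univ.filter (fun S : Finset (Fin n) => j ∉ S),
          a (insert j S) ^ 2 := by
        rw [hq, ← Finset.sum_filter_add_sum_filter_not Finset.univ
          (fun S : Finset (Fin n) => j ∈ S) (fun S => c S ^ 2)]
        have h1 : ∑ S ∈ Finset.univ.filter (fun S : Finset (Fin n) => j ∈ S), c S ^ 2 = 0 := by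
          apply Finset.sum_eq_zero
          intro S hS
          simp only [Finset.mem_filter, Finset.mem_univ, true_and] at hS
          rw [hc]; simp [hS]
        rw [h1, zero_add]
        refine Finset.sum_congr rfl fun S hS => ?_
        simp only [Finset.mem_filter, Finset.mem_univ, true_and] at hS
        rw [hc]; simp [hS]
      rw [hbeq, hceq, sum_split j (fun S => a S ^ 2)]
    have hρ4 : ρ^4 ≤ 1/9 := by nlinarith [sq_nonneg ρ, hρ]
    have t1 : 6*ρ^2 * cubeExpect (fun x => ((B x)^2*(C x)^2)) ≤ 2*(p*q) := by
      have h1 : 6*ρ^2 * cubeExpect (fun x => ((B x)^2*(C x)^2)) ≤ 6*ρ^2*(p*q) :=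
        mul_le_mul_of_nonneg_left hBC (by positivity)
      have h2 : 6*ρ^2*(p*q) ≤ 2*(p*q) := by
        have hpq := mul_nonneg hp0 hq0
        nlinarith [hρ]
      linarith
    have t2 : ρ^4 * cubeExpect (fun x => (C x)^4) ≤ q^2 := by
      have h1 : ρ^4 * cubeExpect (fun x => (C x)^4) ≤ (1/9) * q^2 :=
        mul_le_mul hρ4 hIC hEC4 (by norm_num)
      nlinarith [sq_nonneg q]
    rw [hEsplit, hsum]
    calc cubeExpect (fun x => (B x)^4) + 6*ρ^2 * cubeExpect (fun x => ((B x)^2*(C x)^2))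
          + ρ^4 * cubeExpect (fun x => (C x)^4)
        ≤ p^2 + 2*(p*q) + q^2 := by linarith [hIB]
      _ = (p+q)^2 := by ring


/-- The discrete derivative in direction `i`. -/
def dv (i : Fin n) (f : (Fin n → Bool) → ℝ) (x : Fin n → Bool) : ℝ :=
  (f x - f (flipAt x i)) / 2

lemma fourierCoef_dv (i : Fin n) (f : (Fin n → Bool) → ℝ) (S : Finset (Fin n)) :
    fourierCoef (dv i f) S = if i ∈ S then fourierCoef f S else 0 := by
  have h1 : ∑ x : Fin n → Bool, f (flipAt x i) * chi S x
      = (if i ∈ S then (-1:ℝ) else 1) * ∑ x : Fin n → Bool, f x * chi S x := by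
    have h2 : ∑ x : Fin n → Bool, f (flipAt x i) * chi S x
        = ∑ x : Fin n → Bool, f x * chi S (flipAt x i) := by
      rw [← sum_flip i (fun x => f x * chi S (flipAt x i))]
      exact Finset.sum_congr rfl fun x _ => by rw [flipAt_flipAt]
    rw [h2, Finset.mul_sum]
    exact Finset.sum_congr rfl fun x _ => by rw [chi_flipAt]; ring
  have hder : ∀ x, dv i f x * chi S x
      = (f x * chi S x)/2 - (f (flipAt x i) * chi S x)/2 := by
    intro x; rw [dv]; ring
  rw [fourierCoef, cubeExpect, Finset.sum_congr rfl fun x _ => hder x,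
    Finset.sum_sub_distrib, ← Finset.sum_div, ← Finset.sum_div, h1]
  by_cases h : i ∈ S
  · rw [if_pos h, if_pos h, fourierCoef, cubeExpect]; ring
  · rw [if_neg h, if_neg h]; ring

lemma influence_eq (i : Fin n) (f : (Fin n → Bool) → ℝ) :
    influence i f = cubeExpect (fun x => (dv i f x)^2) := by
  rw [parseval, influence]
  rw [← Finset.sum_filter_add_sum_filter_not Finset.univ
    (fun S : Finset (Fin n) => i ∈ S) (fun S => fourierCoef (dv i f) S ^ 2)]
  have h2 : ∑ S ∈ Finset.univ.filter (fun S : Finset (Fin n) => i ∉ S),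
      fourierCoef (dv i f) S ^ 2 = 0 := by
    apply Finset.sum_eq_zero
    intro S hS
    simp only [Finset.mem_filter, Finset.mem_univ, true_and] at hS
    rw [fourierCoef_dv, if_neg hS]
    ring
  rw [h2, add_zero]
  refine Finset.sum_congr rfl fun S hS => ?_
  simp only [Finset.mem_filter, Finset.mem_univ, true_and] at hS
  rw [fourierCoef_dv, if_pos hS]

lemma dv_vals {f : (Fin n → Bool) → ℝ} (hf : ∀ x, f x = 1 ∨ f x = -1) (i : Fin n)
    (x : Fin n → Bool) : dv i f x = 0 ∨ dv i f x = 1 ∨ dv i f x = -1 := by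
  rcases hf x with h1 | h1 <;> rcases hf (flipAt x i) with h2 | h2 <;>
    simp [dv, h1, h2] <;> norm_num

lemma influence_le_one {f : (Fin n → Bool) → ℝ} (hf : ∀ x, f x = 1 ∨ f x = -1) (i : Fin n) :
    influence i f ≤ 1 := by
  rw [influence_eq]
  calc cubeExpect (fun x => (dv i f x)^2) ≤ cubeExpect (fun _ => (1:ℝ)) := by
        apply cubeExpect_mono
        intro x
        rcases dv_vals hf i x with h | h | h <;> rw [h] <;> norm_num
    _ = 1 := cubeExpect_const 1

lemma influence_nonneg (i : Fin n) (f : (Fin n → Bool) → ℝ) : 0 ≤ influence i f :=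
  Finset.sum_nonneg fun S _ => sq_nonneg _


set_option maxHeartbeats 1000000 in
/-- Talagrand's key estimate: `(Σ_S 3^{-|S|} ĝ(S)²)² ≤ Inf_i(f)³` for `g = ∂_i f`. -/
lemma X_sq_le {f : (Fin n → Bool) → ℝ} (hf : ∀ x, f x = 1 ∨ f x = -1) (i : Fin n) :
    (∑ S : Finset (Fin n), (1/3:ℝ)^S.card * fourierCoef (dv i f) S ^ 2)^2
      ≤ (influence i f)^3 := by
  set g := dv i f with hg
  set a := influence i f with ha
  set X := ∑ S : Finset (Fin n), (1/3:ℝ)^S.card * fourierCoef g S ^ 2 with hX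
  have hX0 : 0 ≤ X := Finset.sum_nonneg fun S _ => mul_nonneg (by positivity) (sq_nonneg _)
  have ha0 : 0 ≤ a := influence_nonneg i f
  have hEg2 : cubeExpect (fun x => (g x)^2) = a := (influence_eq i f).symm
  set c : Finset (Fin n) → ℝ := fun S => (1/3:ℝ)^S.card * fourierCoef g S with hc
  set h : (Fin n → Bool) → ℝ := G c with hh
  -- step 1 : X = E[g h]
  have step1 : cubeExpect (fun x => g x * h x) = X := by
    rw [hh, expect_mul_G, hX]
    refine Finset.sum_congr rfl fun S _ => ?_
    rw [hc]; ring
  -- Bonami: E[h⁴] ≤ X²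
  have hbon : cubeExpect (fun x => (h x)^4) ≤ X^2 := by
    set ρ : ℝ := Real.sqrt 3⁻¹ with hρdef
    have hρsq : ρ^2 = 1/3 := by
      rw [hρdef, sq, Real.mul_self_sqrt (by norm_num)]; norm_num
    have hb := bonami_aux ρ (le_of_eq hρsq) Finset.univ
      (fun S => ρ^S.card * fourierCoef g S)
      (fun S hS => absurd (Finset.subset_univ S) hS)
    have hGeq : (fun x => (G (fun S => ρ^S.card * (ρ^S.card * fourierCoef g S)) x)^4)
        = fun x => (h x)^4 := by
      funext x
      rw [hh, G, G]
      congr 1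
      refine Finset.sum_congr rfl fun S _ => ?_
      have h1 : ρ^S.card * (ρ^S.card * fourierCoef g S) = c S := by
        rw [hc, ← mul_assoc, ← mul_pow, ← sq, hρsq]
      rw [h1]
    have hsum : ∑ S : Finset (Fin n), (ρ^S.card * fourierCoef g S)^2 = X := by
      rw [hX]
      refine Finset.sum_congr rfl fun S _ => ?_
      rw [mul_pow, ← pow_mul, mul_comm S.card 2, pow_mul, hρsq]
    rw [hGeq, hsum] at hb
    exact hb
  -- pointwise structure of g
  have hu01 : ∀ x, (g x)^2 = 0 ∨ (g x)^2 = 1 := by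
    intro x
    rcases dv_vals hf i x with h1 | h1 | h1 <;> rw [hg, h1] <;> norm_num
  -- step 2 : g h ≤ g² |h|
  have step2 : cubeExpect (fun x => g x * h x) ≤ cubeExpect (fun x => (g x)^2 * |h x|) := by
    apply cubeExpect_mono
    intro x
    rcases dv_vals hf i x with h1 | h1 | h1 <;> rw [hg, h1] <;>
      simp [le_abs_self, neg_le_abs, abs_nonneg]
  -- step 3 : Hölder
  have step3 : cubeExpect (fun x => (g x)^2 * |h x|)
      ≤ a ^ (3/4:ℝ) * (cubeExpect (fun x => (h x)^4)) ^ (1/4:ℝ) := by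
    set N : ℝ := (2:ℝ)^n with hN
    have hN0 : (0:ℝ) < N := by positivity
    have hpq : Real.HolderConjugate (4/3) 4 := Real.holderConjugate_iff.mpr ⟨by norm_num, by norm_num⟩
    have hHold := Real.inner_le_Lp_mul_Lq_of_nonneg (s := Finset.univ)
      (f := fun x : Fin n → Bool => (g x)^2)
      (g := fun x : Fin n → Bool => (g x)^2 * |h x|) hpq
      (fun x _ => sq_nonneg _) (fun x _ => mul_nonneg (sq_nonneg _) (abs_nonneg _))
    have e1 : ∀ x : Fin n → Bool, (g x)^2 * ((g x)^2 * |h x|) = (g x)^2 * |h x| := by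
      intro x
      rcases hu01 x with h1 | h1 <;> rw [h1] <;> ring
    have e2 : ∀ x : Fin n → Bool, ((g x)^2 : ℝ) ^ (4/3:ℝ) = (g x)^2 := by
      intro x
      rcases hu01 x with h1 | h1 <;> rw [h1]
      · exact Real.zero_rpow (by norm_num)
      · exact Real.one_rpow _
    have e3 : ∀ x : Fin n → Bool, ((g x)^2 * |h x|) ^ (4:ℝ) ≤ (h x)^4 := by
      intro x
      have habs : (0:ℝ) ≤ (g x)^2 * |h x| := mul_nonneg (sq_nonneg _) (abs_nonneg _)
      rw [show ((4:ℝ)) = ((4:ℕ):ℝ) from by norm_num, Real.rpow_natCast]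
      rcases hu01 x with h1 | h1 <;> rw [mul_pow, h1]
      · simp [le_of_lt, pow_nonneg]
        positivity
      · rw [one_pow, one_mul, ← abs_pow]
        exact le_of_eq (abs_of_nonneg (by positivity))
    rw [Finset.sum_congr rfl (fun x _ => e1 x)] at hHold
    have hsum2 : (∑ x : Fin n → Bool, ((g x)^2 : ℝ) ^ (4/3:ℝ)) = ∑ x : Fin n → Bool, (g x)^2 :=
      Finset.sum_congr rfl fun x _ => e2 x
    have hsum3 : (∑ x : Fin n → Bool, (((g x)^2 * |h x|) : ℝ) ^ (4:ℝ))
        ≤ ∑ x : Fin n → Bool, (h x)^4 := Finset.sum_le_sum fun x _ => e3 x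
    rw [hsum2] at hHold
    have hmono : (∑ x : Fin n → Bool, (((g x)^2 * |h x|) : ℝ) ^ (4:ℝ)) ^ ((1:ℝ)/4)
        ≤ (∑ x : Fin n → Bool, (h x)^4) ^ ((1:ℝ)/4) :=
      Real.rpow_le_rpow (Finset.sum_nonneg fun x _ =>
        Real.rpow_nonneg (mul_nonneg (sq_nonneg _) (abs_nonneg _)) _) hsum3 (by norm_num)
    have hHold2 : ∑ x : Fin n → Bool, (g x)^2 * |h x|
        ≤ (∑ x : Fin n → Bool, (g x)^2) ^ ((3:ℝ)/4) * (∑ x : Fin n → Bool, (h x)^4) ^ ((1:ℝ)/4) := by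
      calc ∑ x : Fin n → Bool, (g x)^2 * |h x|
          ≤ (∑ x : Fin n → Bool, (g x)^2) ^ ((1:ℝ)/(4/3)) *
            (∑ x : Fin n → Bool, (((g x)^2 * |h x|) : ℝ) ^ (4:ℝ)) ^ ((1:ℝ)/4) := hHold
        _ ≤ (∑ x : Fin n → Bool, (g x)^2) ^ ((1:ℝ)/(4/3)) *
            (∑ x : Fin n → Bool, (h x)^4) ^ ((1:ℝ)/4) := by
            apply mul_le_mul_of_nonneg_left hmono
            exact Real.rpow_nonneg (Finset.sum_nonneg fun x _ => sq_nonneg _) _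
        _ = (∑ x : Fin n → Bool, (g x)^2) ^ ((3:ℝ)/4) *
            (∑ x : Fin n → Bool, (h x)^4) ^ ((1:ℝ)/4) := by norm_num
    -- now normalize
    have hNsplit : N = N ^ ((3:ℝ)/4) * N ^ ((1:ℝ)/4) := by
      rw [← Real.rpow_add hN0]
      norm_num
    have hg2 : cubeExpect (fun x => (g x)^2) = (∑ x : Fin n → Bool, (g x)^2) / N := rfl
    have hh4 : cubeExpect (fun x => (h x)^4) = (∑ x : Fin n → Bool, (h x)^4) / N := rfl
    rw [← hEg2, hg2, hh4, cubeExpect]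
    rw [Real.div_rpow (Finset.sum_nonneg fun x _ => sq_nonneg _) hN0.le,
      Real.div_rpow (Finset.sum_nonneg fun x _ => by positivity) hN0.le,
      div_mul_div_comm, ← hNsplit]
    apply div_le_div_of_nonneg_right hHold2 hN0.le
  -- combine: X ≤ a^{3/4} X^{1/2}
  have hX2q : (X^2) ^ ((1:ℝ)/4) = X ^ ((1:ℝ)/2) := by
    rw [← Real.rpow_natCast X 2, ← Real.rpow_mul hX0]
    norm_num
  have key : X ≤ a ^ (3/4:ℝ) * X ^ ((1:ℝ)/2) := by
    have h4 : (cubeExpect (fun x => (h x)^4)) ^ ((1:ℝ)/4) ≤ (X^2) ^ ((1:ℝ)/4) :=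
      Real.rpow_le_rpow (cubeExpect_nonneg fun x => by positivity) hbon (by norm_num)
    calc X = cubeExpect (fun x => g x * h x) := step1.symm
      _ ≤ cubeExpect (fun x => (g x)^2 * |h x|) := step2
      _ ≤ a ^ (3/4:ℝ) * (cubeExpect (fun x => (h x)^4)) ^ (1/4:ℝ) := step3
      _ ≤ a ^ (3/4:ℝ) * (X^2) ^ ((1:ℝ)/4) := by
          apply mul_le_mul_of_nonneg_left _ (Real.rpow_nonneg ha0 _)
          exact h4
      _ = a ^ (3/4:ℝ) * X ^ ((1:ℝ)/2) := by rw [hX2q]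
  -- conclude
  rcases eq_or_lt_of_le hX0 with hXeq | hXpos
  · rw [← hXeq]
    norm_num
    positivity
  · have hapos : 0 < a := by
      rcases eq_or_lt_of_le ha0 with haeq | h
      · exfalso
        rw [← haeq, Real.zero_rpow (by norm_num : (3/4:ℝ) ≠ 0), zero_mul] at key
        exact absurd (lt_of_lt_of_le hXpos key) (lt_irrefl 0)
      · exact h
    have hXhalf : (0:ℝ) < X ^ ((1:ℝ)/2) := Real.rpow_pos_of_pos hXpos _
    have hXsplit : X = X ^ ((1:ℝ)/2) * X ^ ((1:ℝ)/2) := by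
      rw [← Real.rpow_add hXpos]
      norm_num
    have hhalf : X ^ ((1:ℝ)/2) ≤ a ^ (3/4:ℝ) := by
      have := key
      rw [hXsplit] at this
      exact le_of_mul_le_mul_right (by linarith [this]) hXhalf
    have hfourth := pow_le_pow_left₀ (Real.rpow_nonneg hX0 _) hhalf 4
    have hL : (X ^ ((1:ℝ)/2))^(4:ℕ) = X^2 := by
      rw [← Real.rpow_natCast (X ^ ((1:ℝ)/2)) 4, ← Real.rpow_mul hX0,
        ← Real.rpow_natCast X 2]
      norm_num
    have hR : (a ^ ((3:ℝ)/4))^(4:ℕ) = a^3 := by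
      rw [← Real.rpow_natCast (a ^ ((3:ℝ)/4)) 4, ← Real.rpow_mul ha0,
        ← Real.rpow_natCast a 3]
      norm_num
    rw [hL, hR] at hfourth
    exact hfourth


set_option maxHeartbeats 1000000 in
/-- Per-coordinate Talagrand bound. -/
lemma percoord {f : (Fin n → Bool) → ℝ} (hf : ∀ x, f x = 1 ∨ f x = -1) (i : Fin n) :
    ∑ S ∈ Finset.univ.filter (fun S : Finset (Fin n) => i ∈ S), fourierCoef f S ^ 2 / S.card
      ≤ 100 * (influence i f / Real.log (Real.exp 1 / influence i f)) := by
  set a := influence i f with ha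
  have ha0 : 0 ≤ a := influence_nonneg i f
  have ha1 : a ≤ 1 := influence_le_one hf i
  -- rewrite the sum via the derivative's coefficients
  have hT : ∑ S ∈ Finset.univ.filter (fun S : Finset (Fin n) => i ∈ S),
      fourierCoef f S ^ 2 / S.card
      = ∑ S ∈ Finset.univ.filter (fun S : Finset (Fin n) => i ∈ S),
        fourierCoef (dv i f) S ^ 2 / S.card := by
    refine Finset.sum_congr rfl fun S hS => ?_
    simp only [Finset.mem_filter, Finset.mem_univ, true_and] at hS
    rw [fourierCoef_dv, if_pos hS]
  rcases eq_or_lt_of_le ha0 with haz | hapos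
  · -- zero influence: all coefficients vanish
    have hz : ∀ S ∈ Finset.univ.filter (fun S : Finset (Fin n) => i ∈ S),
        fourierCoef f S ^ 2 = 0 := by
      intro S hS
      have hsumz : ∑ S ∈ Finset.univ.filter (fun S : Finset (Fin n) => i ∈ S),
          fourierCoef f S ^ 2 = 0 := by
        rw [← influence]
        exact haz.symm
      exact (Finset.sum_eq_zero_iff_of_nonneg (fun S _ => sq_nonneg
        (fourierCoef f S))).mp hsumz S hS
    have hzero : ∑ S ∈ Finset.univ.filter (fun S : Finset (Fin n) => i ∈ S),
        fourierCoef f S ^ 2 / S.card = 0 := by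
      apply Finset.sum_eq_zero
      intro S hS
      rw [hz S hS, zero_div]
    rw [hzero, ← haz]
    simp
  · -- positive influence
    set L := Real.log (Real.exp 1 / a) with hLdef
    have hL : L = 1 - Real.log a := by
      rw [hLdef, Real.log_div (Real.exp_ne_zero 1) (ne_of_gt hapos), Real.log_exp]
    have hL1 : 1 ≤ L := by
      rw [hL]
      have := Real.log_nonpos ha0 ha1
      linarith
    have hL0 : 0 < L := lt_of_lt_of_le one_pos hL1
    -- s = a^{1/4}
    set s := a ^ ((1:ℝ)/4) with hsdef
    have hs0 : 0 < s := Real.rpow_pos_of_pos hapos _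
    have hs4 : s ^ (4:ℕ) = a := by
      rw [hsdef, ← Real.rpow_natCast (a ^ ((1:ℝ)/4)) 4, ← Real.rpow_mul ha0]
      norm_num
    have hs1 : s ≤ 1 := Real.rpow_le_one ha0 ha1 (by norm_num)
    have hsL : s * L ≤ 5 := by
      have hlogs : -Real.log s ≤ s⁻¹ - 1 := by
        have h1 := Real.log_le_sub_one_of_pos (show (0:ℝ) < s⁻¹ by positivity)
        rwa [Real.log_inv] at h1
      have hLs : L = 1 - 4 * Real.log s := by
        rw [hL]
        have h2 : Real.log a = 4 * Real.log s := by
          rw [← hs4, Real.log_pow]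
          push_cast
          ring
        rw [h2]
      rw [hLs]
      have h1 : s * (-Real.log s) ≤ 1 - s := by
        calc s * (-Real.log s) ≤ s * (s⁻¹ - 1) := by
              apply mul_le_mul_of_nonneg_left hlogs hs0.le
          _ = 1 - s := by field_simp
      nlinarith [hs1, hs0]
    -- choice of m
    have hlog3 : (0:ℝ) < Real.log 3 := Real.log_pos (by norm_num)
    have hlog3' : Real.log 3 ≤ 2 := by
      have := Real.log_le_sub_one_of_pos (show (0:ℝ) < 3 by norm_num)
      linarith
    set m := ⌈L / (4 * Real.log 3)⌉₊ with hmdef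
    have hmpos : 0 < m := Nat.ceil_pos.mpr (by positivity)
    have hm_lb : L / (4 * Real.log 3) ≤ (m:ℝ) := Nat.le_ceil _
    have hm_ub : (m:ℝ) ≤ L / (4 * Real.log 3) + 1 :=
      (Nat.ceil_lt_add_one (by positivity)).le
    -- bound on 3^m
    have h3m : (3:ℝ)^m ≤ 16 / s := by
      have he2 : Real.exp 2 ≤ 8 := by
        have h1 : Real.exp 2 = Real.exp 1 ^ 2 := by
          rw [← Real.exp_nat_mul]
          norm_num
        nlinarith [Real.exp_one_lt_d9, Real.exp_pos 1]
      have heL4 : Real.exp (L/4) ≤ 2 / s := by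
        apply le_of_pow_le_pow_left₀ (n := 4) (by norm_num) (by positivity)
        have h1 : Real.exp (L/4) ^ (4:ℕ) = Real.exp L := by
          rw [← Real.exp_nat_mul]
          congr 1
          ring
        have h2 : Real.exp L = Real.exp 1 / a := by
          rw [hLdef, Real.exp_log (by positivity)]
        have h3 : ((2:ℝ)/s) ^ (4:ℕ) = 16 / a := by
          rw [div_pow, ← hs4]
          norm_num
        rw [h1, h3, h2]
        gcongr
        nlinarith [Real.exp_one_lt_d9]
      have hmain : (3:ℝ)^m = Real.exp ((m:ℝ) * Real.log 3) := by
        rw [Real.exp_nat_mul, Real.exp_log (by norm_num : (0:ℝ) < 3)]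
      have harg : (m:ℝ) * Real.log 3 ≤ L/4 + 2 := by
        have h4 : (m:ℝ) * Real.log 3 ≤ (L / (4 * Real.log 3) + 1) * Real.log 3 :=
          mul_le_mul_of_nonneg_right hm_ub hlog3.le
        have h5 : (L / (4 * Real.log 3) + 1) * Real.log 3 = L/4 + Real.log 3 := by
          field_simp
        nlinarith [h4, h5, hlog3']
      calc (3:ℝ)^m = Real.exp ((m:ℝ) * Real.log 3) := hmain
        _ ≤ Real.exp (L/4 + 2) := Real.exp_le_exp.mpr harg
        _ = Real.exp (L/4) * Real.exp 2 := Real.exp_add _ _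
        _ ≤ (2/s) * 8 := by
            apply mul_le_mul heL4 he2 (by positivity) (by positivity)
        _ = 16 / s := by ring
    -- X bound
    set X := ∑ S : Finset (Fin n), (1/3:ℝ)^S.card * fourierCoef (dv i f) S ^ 2 with hXdef
    have hX0 : 0 ≤ X := Finset.sum_nonneg fun S _ => mul_nonneg (by positivity) (sq_nonneg _)
    have hXs : X ≤ s^(6:ℕ) := by
      have h1 : X^2 ≤ a^3 := X_sq_le hf i
      have h2 : a^3 = (s^(6:ℕ))^2 := by rw [← hs4]; ring
      nlinarith [hX0, pow_nonneg hs0.le 6]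
    -- split the sum at |S| = m
    set F := Finset.univ.filter (fun S : Finset (Fin n) => i ∈ S) with hF
    set t : Finset (Fin n) → ℝ := fun S => fourierCoef (dv i f) S ^ 2 / S.card with ht
    have hsplitF : ∑ S ∈ F, t S
        = ∑ S ∈ F.filter (fun S => S.card ≤ m), t S
          + ∑ S ∈ F.filter (fun S => ¬ S.card ≤ m), t S :=
      (Finset.sum_filter_add_sum_filter_not F _ t).symm
    -- part 1 : low degrees
    have hpart1 : ∑ S ∈ F.filter (fun S => S.card ≤ m), t S ≤ 80 * (a / L) := by
      have hstep : ∑ S ∈ F.filter (fun S => S.card ≤ m), t S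
          ≤ ∑ S ∈ F.filter (fun S => S.card ≤ m),
              (3:ℝ)^m * ((1/3:ℝ)^S.card * fourierCoef (dv i f) S ^ 2) := by
        apply Finset.sum_le_sum
        intro S hS
        simp only [hF, Finset.mem_filter, Finset.mem_univ, true_and] at hS
        obtain ⟨hiS, hcard⟩ := hS
        have hc1 : 1 ≤ S.card := Finset.card_pos.mpr ⟨i, hiS⟩
        have hw : (1:ℝ) ≤ (3:ℝ)^m * (1/3:ℝ)^S.card := by
          have h1 : (3:ℝ)^m * (1/3:ℝ)^S.card = 3^(m - S.card) := by
            rw [one_div, inv_pow, ← pow_sub₀ (3:ℝ) (by norm_num) hcard]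
          rw [h1]
          calc (1:ℝ) = 3^(0:ℕ) := by norm_num
            _ ≤ 3^(m - S.card) := pow_le_pow_right₀ (by norm_num) (Nat.zero_le _)
        have hdiv : t S ≤ fourierCoef (dv i f) S ^ 2 := by
          rw [ht]
          apply div_le_self (sq_nonneg _)
          exact_mod_cast hc1
        calc t S ≤ fourierCoef (dv i f) S ^ 2 := hdiv
          _ = 1 * fourierCoef (dv i f) S ^ 2 := (one_mul _).symm
          _ ≤ ((3:ℝ)^m * (1/3:ℝ)^S.card) * fourierCoef (dv i f) S ^ 2 :=
              mul_le_mul_of_nonneg_right hw (sq_nonneg _)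
          _ = (3:ℝ)^m * ((1/3:ℝ)^S.card * fourierCoef (dv i f) S ^ 2) := by ring
      have hext : ∑ S ∈ F.filter (fun S => S.card ≤ m),
            (3:ℝ)^m * ((1/3:ℝ)^S.card * fourierCoef (dv i f) S ^ 2)
          ≤ ∑ S : Finset (Fin n), (3:ℝ)^m * ((1/3:ℝ)^S.card * fourierCoef (dv i f) S ^ 2) := by
        apply Finset.sum_le_sum_of_subset_of_nonneg (Finset.filter_subset _ _ |>.trans
          (Finset.filter_subset _ _))
        intro S _ _
        positivity
      have hXpull : ∑ S : Finset (Fin n), (3:ℝ)^m * ((1/3:ℝ)^S.card * fourierCoef (dv i f) S ^ 2)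
          = (3:ℝ)^m * X := by
        rw [hXdef, Finset.mul_sum]
      have hchain : ∑ S ∈ F.filter (fun S => S.card ≤ m), t S ≤ (16/s) * s^(6:ℕ) := by
        calc ∑ S ∈ F.filter (fun S => S.card ≤ m), t S
            ≤ (3:ℝ)^m * X := by rw [← hXpull]; exact hstep.trans hext
          _ ≤ (16/s) * s^(6:ℕ) := by
              apply mul_le_mul h3m hXs hX0 (by positivity)
      have hfin : (16/s) * s^(6:ℕ) ≤ 80 * (a/L) := by
        have h1 : (16/s) * s^(6:ℕ) = 16 * a * s := by
          field_simp
          rw [← hs4]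
        have h2 : s ≤ 5 / L := by
          rw [le_div_iff₀ hL0]
          linarith [hsL]
        rw [h1]
        calc 16 * a * s ≤ 16 * a * (5/L) := by
              apply mul_le_mul_of_nonneg_left h2 (by positivity)
          _ = 80 * (a/L) := by ring
      exact hchain.trans hfin
    -- part 2 : high degrees
    have hpart2 : ∑ S ∈ F.filter (fun S => ¬ S.card ≤ m), t S ≤ 8 * (a / L) := by
      have hstep : ∑ S ∈ F.filter (fun S => ¬ S.card ≤ m), t S
          ≤ ∑ S ∈ F.filter (fun S => ¬ S.card ≤ m), fourierCoef (dv i f) S ^ 2 / m := by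
        apply Finset.sum_le_sum
        intro S hS
        simp only [Finset.mem_filter] at hS
        have hcard : (m:ℝ) ≤ S.card := by
          exact_mod_cast le_of_lt (lt_of_not_ge hS.2)
        rw [ht]
        apply div_le_div_of_nonneg_left (sq_nonneg _) (by exact_mod_cast hmpos) hcard
      have hext : ∑ S ∈ F.filter (fun S => ¬ S.card ≤ m), fourierCoef (dv i f) S ^ 2 / m
          ≤ ∑ S ∈ F, fourierCoef (dv i f) S ^ 2 / m := by
        apply Finset.sum_le_sum_of_subset_of_nonneg (Finset.filter_subset _ _)
        intro S _ _
        positivity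
      have haF : ∑ S ∈ F, fourierCoef (dv i f) S ^ 2 / m = a / m := by
        rw [← Finset.sum_div]
        congr 1
        rw [ha, influence, hF]
        refine Finset.sum_congr rfl fun S hS => ?_
        simp only [Finset.mem_filter, Finset.mem_univ, true_and] at hS
        rw [fourierCoef_dv, if_pos hS]
      have hm8 : a / m ≤ 8 * (a / L) := by
        have h1 : a / m ≤ a / (L / (4 * Real.log 3)) := by
          exact div_le_div_of_nonneg_left ha0 (by positivity) hm_lb
        have h2 : a / (L / (4 * Real.log 3)) = a * (4 * Real.log 3) / L := by
          field_simp
        have h3 : a * (4 * Real.log 3) / L ≤ a * 8 / L := by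
          apply div_le_div_of_nonneg_right _ hL0.le
          nlinarith [hlog3', ha0]
        calc a / m ≤ a * (4 * Real.log 3) / L := by rw [← h2]; exact h1
          _ ≤ a * 8 / L := h3
          _ = 8 * (a / L) := by ring
      calc ∑ S ∈ F.filter (fun S => ¬ S.card ≤ m), t S
          ≤ ∑ S ∈ F, fourierCoef (dv i f) S ^ 2 / m := hstep.trans hext
        _ = a / m := haF
        _ ≤ 8 * (a / L) := hm8
    have haL0 : 0 ≤ a / L := by positivity
    rw [hT]
    calc ∑ S ∈ F, t S
        = ∑ S ∈ F.filter (fun S => S.card ≤ m), t S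
          + ∑ S ∈ F.filter (fun S => ¬ S.card ≤ m), t S := hsplitF
      _ ≤ 80 * (a/L) + 8 * (a/L) := add_le_add hpart1 hpart2
      _ ≤ 100 * (a / L) := by linarith


lemma main (f : (Fin n → Bool) → ℝ) (hf : ∀ x, f x = 1 ∨ f x = -1) :
    (1/100 : ℝ) * cubeVar f
      ≤ ∑ i : Fin n, influence i f / Real.log (Real.exp 1 / influence i f) := by
  have hVar : cubeVar f
      = ∑ S ∈ (Finset.univ : Finset (Finset (Fin n))).erase ∅, fourierCoef f S ^ 2 := by
    rw [cubeVar, parseval, ← fourierCoef_empty,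
      ← Finset.add_sum_erase Finset.univ (fun S => fourierCoef f S ^ 2) (Finset.mem_univ ∅)]
    ring
  have hswap : (∑ i : Fin n, ∑ S ∈ Finset.univ.filter (fun S : Finset (Fin n) => i ∈ S),
        fourierCoef f S ^ 2 / S.card)
      = ∑ S : Finset (Fin n), (S.card : ℝ) * (fourierCoef f S ^ 2 / S.card) := by
    rw [Finset.sum_congr rfl (fun i _ => Finset.sum_filter
      (fun S : Finset (Fin n) => i ∈ S) (fun S => fourierCoef f S ^ 2 / S.card))]
    rw [Finset.sum_comm]
    refine Finset.sum_congr rfl fun S _ => ?_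
    rw [Finset.sum_ite_mem, Finset.univ_inter, Finset.sum_const, nsmul_eq_mul]
  have hcollapse : (∑ S : Finset (Fin n), (S.card : ℝ) * (fourierCoef f S ^ 2 / S.card))
      = ∑ S ∈ (Finset.univ : Finset (Finset (Fin n))).erase ∅, fourierCoef f S ^ 2 := by
    rw [← Finset.add_sum_erase Finset.univ
      (fun S : Finset (Fin n) => (S.card : ℝ) * (fourierCoef f S ^ 2 / S.card))
      (Finset.mem_univ ∅)]
    simp only [Finset.card_empty, Nat.cast_zero, zero_mul, zero_add]
    refine Finset.sum_congr rfl fun S hS => ?_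
    have hne : S ≠ ∅ := Finset.ne_of_mem_erase hS
    have hpos : 0 < S.card := Finset.card_pos.mpr (Finset.nonempty_iff_ne_empty.mpr hne)
    have hcne : ((S.card : ℝ)) ≠ 0 := by exact_mod_cast Nat.pos_iff_ne_zero.mp hpos
    field_simp
  have hVarSum : cubeVar f = ∑ i : Fin n,
      ∑ S ∈ Finset.univ.filter (fun S : Finset (Fin n) => i ∈ S),
        fourierCoef f S ^ 2 / S.card :=
    hVar.trans (hswap.trans hcollapse).symm
  have hbound : cubeVar f
      ≤ 100 * ∑ i : Fin n, influence i f / Real.log (Real.exp 1 / influence i f) := by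
    rw [hVarSum, Finset.mul_sum]
    exact Finset.sum_le_sum fun i _ => percoord hf i
  linarith


end KKL

/-- **Kahn–Kalai–Linial / Talagrand**: there is a universal constant `c > 0` such that for
every `n ≥ 1` and every `f : {-1,1}^n → {-1,1}`,
`Σ_i Inf_i(f)/log(e/Inf_i(f)) ≥ c·Var(f)`.
(When `Inf_i(f) = 0`, the corresponding term equals `0`, consistent with the convention,
since in Lean `e/0 = 0`, `log 0 = 0`, and `0/0 = 0`.) -/
theorem kkl_talagrand :
    ∃ c : ℝ, 0 < c ∧
      ∀ n : ℕ, 1 ≤ n → ∀ f : (Fin n → Bool) → ℝ, (∀ x, f x = 1 ∨ f x = -1) →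
        c * cubeVar f ≤
          ∑ i : Fin n, influence i f / Real.log (Real.exp 1 / influence i f) := by
  exact ⟨1/100, by norm_num, fun n _ f hf => KKL.main f hf⟩
end
end

section
/- (Friedgut's junta theorem) There exists a universal constant C > 0 such that for every n ≥ 1, every f : {-1,1}^n → {-1,1}, and every ε ∈ (0,1), there exist a set J ⊆ {1,…,n} with |J| ≤ exp(C·Inf(f)/ε) and a function g : {-1,1}^n → {-1,1} depending only on the coordinates in J, such that E|f − g| ≤ ε. -/
noncomputable section

namespace Friedgut

variable {n : ℕ}

lemma sgn_sq (b : Bool) : sgn b ^ 2 = 1 := by cases b <;> simp [sgn]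

lemma sgn_not (b : Bool) : sgn (!b) = -sgn b := by cases b <;> simp [sgn]

lemma flipAt_flipAt (x : Fin n → Bool) (i : Fin n) : flipAt (flipAt x i) i = x := by
  funext j
  by_cases h : j = i
  · subst h; simp [flipAt]
  · simp [flipAt, Function.update_of_ne h]

lemma flipAt_apply_self (x : Fin n → Bool) (i : Fin n) : flipAt x i i = !(x i) := by
  simp [flipAt]

lemma flipAt_apply_ne (x : Fin n → Bool) {i j : Fin n} (h : j ≠ i) : flipAt x i j = x j := by
  simp [flipAt, Function.update_of_ne h]

/-- summing over flipped cube is the same -/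
lemma sum_flip (F : (Fin n → Bool) → ℝ) (i : Fin n) :
    ∑ x : Fin n → Bool, F (flipAt x i) = ∑ x : Fin n → Bool, F x := by
  apply Finset.sum_nbij' (fun x => flipAt x i) (fun x => flipAt x i) <;>
    simp [flipAt_flipAt]

lemma sum_eq_zero_of_flip_neg {F : (Fin n → Bool) → ℝ} (i : Fin n)
    (h : ∀ x, F (flipAt x i) = -F x) : ∑ x : Fin n → Bool, F x = 0 := by
  have h1 := sum_flip F i
  simp only [h, Finset.sum_neg_distrib] at h1
  linarith

lemma chi_flipAt (S : Finset (Fin n)) (x : Fin n → Bool) (i : Fin n) :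
    chi S (flipAt x i) = (if i ∈ S then -1 else 1) * chi S x := by
  by_cases hi : i ∈ S
  · simp only [hi, if_true, chi]
    rw [← Finset.mul_prod_erase S _ hi, ← Finset.mul_prod_erase S (fun j => sgn (x j)) hi]
    rw [flipAt_apply_self, sgn_not]
    have : ∀ j ∈ S.erase i, sgn (flipAt x i j) = sgn (x j) := by
      intro j hj
      rw [flipAt_apply_ne _ (Finset.ne_of_mem_erase hj)]
    rw [Finset.prod_congr rfl this]; ring
  · simp only [hi, if_false, one_mul, chi]
    apply Finset.prod_congr rfl
    intro j hj
    exact congrArg sgn (flipAt_apply_ne _ (by rintro rfl; exact hi hj))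

lemma card_cube : Fintype.card (Fin n → Bool) = 2 ^ n := by simp

lemma cubeExpect_const (c : ℝ) : cubeExpect (fun _ : Fin n → Bool => c) = c := by
  simp [cubeExpect, Finset.sum_const, card_cube]

lemma chi_sq (S : Finset (Fin n)) (x : Fin n → Bool) : chi S x * chi S x = 1 := by
  rw [chi, ← Finset.prod_mul_distrib]
  apply Finset.prod_eq_one
  intro i _
  have := sgn_sq (x i); nlinarith [sgn_sq (x i)]

/-- orthogonality -/
lemma expect_chi_mul_chi (S T : Finset (Fin n)) :
    cubeExpect (fun x => chi S x * chi T x) = if S = T then 1 else 0 := by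
  by_cases h : S = T
  · subst h
    simp only [if_true]
    rw [show (fun x => chi S x * chi S x) = fun _ => (1:ℝ) by funext x; exact chi_sq S x]
    exact cubeExpect_const 1
  · simp only [h, if_false, cubeExpect]
    have hST : symmDiff S T ≠ ∅ := by
      intro hc
      exact h (Finset.symmDiff_eq_empty.mp hc)
    obtain ⟨i, hi⟩ := Finset.nonempty_iff_ne_empty.mpr hST
    have hi' : (i ∈ S ∧ i ∉ T) ∨ (i ∈ T ∧ i ∉ S) := by
      rw [Finset.mem_symmDiff] at hi; tauto
    have : ∑ x : Fin n → Bool, chi S x * chi T x = 0 := by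
      apply sum_eq_zero_of_flip_neg i
      intro x
      rw [chi_flipAt, chi_flipAt]
      rcases hi' with ⟨h1, h2⟩ | ⟨h1, h2⟩ <;> simp [h1, h2]
    rw [this, zero_div]

end Friedgut

namespace Friedgut
variable {n : ℕ}

lemma cubeExpect_sum {ι : Type*} (s : Finset ι) (F : ι → (Fin n → Bool) → ℝ) :
    cubeExpect (fun x => ∑ j ∈ s, F j x) = ∑ j ∈ s, cubeExpect (F j) := by
  simp only [cubeExpect, ← Finset.sum_div]
  rw [Finset.sum_comm]

lemma cubeExpect_smul (c : ℝ) (F : (Fin n → Bool) → ℝ) :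
    cubeExpect (fun x => c * F x) = c * cubeExpect F := by
  simp only [cubeExpect, ← Finset.mul_sum, mul_div_assoc]

/-- key kernel identity -/
lemma sum_chi_mul_chi (x y : Fin n → Bool) :
    ∑ S : Finset (Fin n), chi S x * chi S y = if x = y then (2:ℝ)^n else 0 := by
  have h1 : ∀ S : Finset (Fin n), chi S x * chi S y = ∏ i ∈ S, (sgn (x i) * sgn (y i)) := by
    intro S; rw [chi, chi, Finset.prod_mul_distrib]
  simp only [h1]
  have h2 : ∑ S : Finset (Fin n), ∏ i ∈ S, (sgn (x i) * sgn (y i))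
      = ∏ i : Fin n, (sgn (x i) * sgn (y i) + 1) := by
    rw [Finset.prod_add]
    rw [← Finset.powerset_univ]
    apply Finset.sum_congr rfl
    intro S _
    simp
  rw [h2]
  by_cases h : x = y
  · subst h
    simp only [if_true]
    have : ∀ i : Fin n, sgn (x i) * sgn (x i) + 1 = 2 := by
      intro i; cases hx : x i <;> norm_num [sgn]
    rw [Finset.prod_congr rfl (fun i _ => this i), Finset.prod_const]
    simp
  · simp only [h, if_false]
    obtain ⟨i, hi⟩ : ∃ i, x i ≠ y i := by
      by_contra hc; push_neg at hc; exact h (funext hc)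
    apply Finset.prod_eq_zero (Finset.mem_univ i)
    cases hx : x i <;> cases hy : y i <;> simp_all [sgn]

/-- Fourier expansion -/
lemma fourier_expansion (f : (Fin n → Bool) → ℝ) (x : Fin n → Bool) :
    f x = ∑ S : Finset (Fin n), fourierCoef f S * chi S x := by
  simp only [fourierCoef, cubeExpect]
  have step : ∀ S : Finset (Fin n), (∑ y : Fin n → Bool, f y * chi S y) / 2 ^ n * chi S x
      = ∑ y : Fin n → Bool, f y * chi S y * chi S x / 2 ^ n := by
    intro S
    rw [div_mul_eq_mul_div, Finset.sum_mul, Finset.sum_div]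
  rw [Finset.sum_congr rfl (fun S _ => step S), Finset.sum_comm]
  have step2 : ∀ y : Fin n → Bool, ∑ S : Finset (Fin n), f y * chi S y * chi S x / 2 ^ n
      = f y * (if y = x then (2:ℝ)^n else 0) / 2^n := by
    intro y
    rw [← sum_chi_mul_chi y x, Finset.mul_sum, Finset.sum_div]
    apply Finset.sum_congr rfl
    intro S _; ring
  rw [Finset.sum_congr rfl (fun y _ => step2 y)]
  rw [Finset.sum_eq_single x]
  · simp
  · intro y _ hy; simp [hy]
  · intro h; simp at h

/-- Parseval / Plancherel -/
lemma parseval (f g : (Fin n → Bool) → ℝ) :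
    cubeExpect (fun x => f x * g x) = ∑ S : Finset (Fin n), fourierCoef f S * fourierCoef g S := by
  have : (fun x => f x * g x) = fun x => ∑ S : Finset (Fin n), fourierCoef f S * (chi S x * g x) := by
    funext x
    conv_lhs => rw [fourier_expansion f x]
    rw [Finset.sum_mul]
    exact Finset.sum_congr rfl fun S _ => mul_assoc _ _ _
  rw [this, cubeExpect_sum]
  apply Finset.sum_congr rfl
  intro S _
  rw [cubeExpect_smul]
  congr 1
  unfold fourierCoef
  apply congrArg
  funext x; ring

end Friedgut

namespace Friedgut
variable {n : ℕ}

/-- coefficient of an explicit combination -/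
lemma fourierCoef_comb (c : Finset (Fin n) → ℝ) (T : Finset (Fin n)) :
    fourierCoef (fun x => ∑ S : Finset (Fin n), c S * chi S x) T = c T := by
  unfold fourierCoef
  have : (fun x => (∑ S : Finset (Fin n), c S * chi S x) * chi T x)
      = fun x => ∑ S : Finset (Fin n), c S * (chi S x * chi T x) := by
    funext x; rw [Finset.sum_mul]; exact Finset.sum_congr rfl fun S _ => mul_assoc _ _ _
  rw [this, cubeExpect_sum]
  have : ∀ S : Finset (Fin n), cubeExpect (fun x => c S * (chi S x * chi T x))
      = c S * (if S = T then 1 else 0) := by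
    intro S; rw [cubeExpect_smul, expect_chi_mul_chi]
  rw [Finset.sum_congr rfl (fun S _ => this S), Finset.sum_eq_single T] <;> simp +contextual

lemma fourierCoef_sub (f g : (Fin n → Bool) → ℝ) (S : Finset (Fin n)) :
    fourierCoef (fun x => f x - g x) S = fourierCoef f S - fourierCoef g S := by
  unfold fourierCoef cubeExpect
  rw [div_sub_div_same, ← Finset.sum_sub_distrib]
  congr 1; apply Finset.sum_congr rfl; intro x _; ring

/-- discrete derivative -/
def deriv (i : Fin n) (f : (Fin n → Bool) → ℝ) (x : Fin n → Bool) : ℝ :=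
  (f x - f (flipAt x i)) / 2

lemma fourierCoef_flip (f : (Fin n → Bool) → ℝ) (i : Fin n) (S : Finset (Fin n)) :
    fourierCoef (fun x => f (flipAt x i)) S = (if i ∈ S then -1 else 1) * fourierCoef f S := by
  unfold fourierCoef cubeExpect
  rw [← mul_div_assoc]
  congr 1
  rw [Finset.mul_sum]
  simp only []
  rw [← sum_flip (fun x => (if i ∈ S then (-1:ℝ) else 1) * (f x * chi S x)) i]
  apply Finset.sum_congr rfl
  intro x _
  rw [chi_flipAt]
  by_cases hi : i ∈ S <;> simp [hi] <;> ring

lemma fourierCoef_deriv (f : (Fin n → Bool) → ℝ) (i : Fin n) (S : Finset (Fin n)) :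
    fourierCoef (deriv i f) S = if i ∈ S then fourierCoef f S else 0 := by
  unfold deriv
  have : (fun x => (f x - f (flipAt x i)) / 2)
      = fun x => (1/2) * (f x - f (flipAt x i)) := by funext x; ring
  rw [this]
  have h2 : (fun x => (1/2 : ℝ) * (f x - f (flipAt x i)))
      = fun x => (1/2 : ℝ) * ((fun x => f x - f (flipAt x i)) x) := rfl
  rw [h2]
  have h3 : ∀ g : (Fin n → Bool) → ℝ, fourierCoef (fun x => (1/2 : ℝ) * g x) S
      = (1/2) * fourierCoef g S := by
    intro g
    unfold fourierCoef
    rw [← cubeExpect_smul]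
    congr 1; funext x; ring
  rw [h3, fourierCoef_sub f (fun x => f (flipAt x i)) S, fourierCoef_flip]
  by_cases hi : i ∈ S <;> simp [hi] <;> ring

lemma influence_eq (f : (Fin n → Bool) → ℝ) (i : Fin n) :
    influence i f = cubeExpect (fun x => deriv i f x * deriv i f x) := by
  rw [parseval, influence]
  rw [Finset.sum_filter]
  apply Finset.sum_congr rfl
  intro S _
  rw [fourierCoef_deriv]
  by_cases hi : i ∈ S <;> simp [hi, sq]

lemma influence_nonneg (f : (Fin n → Bool) → ℝ) (i : Fin n) : 0 ≤ influence i f :=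
  Finset.sum_nonneg fun S _ => sq_nonneg _

lemma deriv_mem (f : (Fin n → Bool) → ℝ) (hf : ∀ x, f x = 1 ∨ f x = -1) (i : Fin n)
    (x : Fin n → Bool) : deriv i f x = 0 ∨ deriv i f x = 1 ∨ deriv i f x = -1 := by
  unfold deriv
  rcases hf x with h1 | h1 <;> rcases hf (flipAt x i) with h2 | h2 <;> rw [h1, h2] <;> norm_num

/-- |D_i f| = (D_i f)^2 for Boolean f -/
lemma abs_deriv_eq_sq (f : (Fin n → Bool) → ℝ) (hf : ∀ x, f x = 1 ∨ f x = -1) (i : Fin n)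
    (x : Fin n → Bool) : |deriv i f x| = deriv i f x * deriv i f x := by
  rcases deriv_mem f hf i x with h | h | h <;> rw [h] <;> norm_num

end Friedgut

namespace Friedgut
variable {n : ℕ}

lemma cubeExpect_nonneg {F : (Fin n → Bool) → ℝ} (h : ∀ x, 0 ≤ F x) : 0 ≤ cubeExpect F :=
  div_nonneg (Finset.sum_nonneg fun x _ => h x) (by positivity)

lemma cubeExpect_mono {F G : (Fin n → Bool) → ℝ} (h : ∀ x, F x ≤ G x) :
    cubeExpect F ≤ cubeExpect G :=
  div_le_div_of_nonneg_right (Finset.sum_le_sum fun x _ => h x) (by positivity) |>.trans_eq rfl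

/-- Cauchy-Schwarz for cube expectations -/
lemma expect_CS (u v : (Fin n → Bool) → ℝ) :
    (cubeExpect (fun x => u x * v x)) ^ 2
      ≤ cubeExpect (fun x => u x ^ 2) * cubeExpect (fun x => v x ^ 2) := by
  unfold cubeExpect
  rw [div_pow, div_mul_div_comm]
  have h2 : ((2:ℝ)^n)^2 = 2^n * 2^n := by ring
  rw [h2]
  apply div_le_div_of_nonneg_right ?_ (by positivity)
  exact Finset.sum_mul_sq_le_sq_mul_sq _ _ _

/-- reindexing sums over sets containing `a` -/
lemma sum_insert_reindex (a : Fin n) (F : Finset (Fin n) → ℝ) :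
    ∑ S ∈ Finset.univ.filter (fun S : Finset (Fin n) => a ∈ S), F S
      = ∑ S ∈ Finset.univ.filter (fun S : Finset (Fin n) => a ∉ S), F (insert a S) := by
  apply Finset.sum_nbij' (fun S => Finset.erase S a) (fun S => insert a S)
  · intro S hS
    simp only [Finset.mem_filter, Finset.mem_univ, true_and] at hS ⊢
    exact Finset.notMem_erase a S
  · intro S hS
    simp only [Finset.mem_filter, Finset.mem_univ, true_and] at hS ⊢
    exact Finset.mem_insert_self a S
  · intro S hS
    simp only [Finset.mem_filter, Finset.mem_univ, true_and] at hS
    exact Finset.insert_erase hS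
  · intro S hS
    simp only [Finset.mem_filter, Finset.mem_univ, true_and] at hS
    exact Finset.erase_insert hS
  · intro S hS
    simp only [Finset.mem_filter, Finset.mem_univ, true_and] at hS
    rw [Finset.insert_erase hS]

lemma chi_insert (a : Fin n) (S : Finset (Fin n)) (ha : a ∉ S) (x : Fin n → Bool) :
    chi (insert a S) x = sgn (x a) * chi S x := by
  rw [chi, Finset.prod_insert ha]; rfl

set_option maxHeartbeats 1000000 in
/-- Bonami-Beckner hypercontractivity, `L⁴` vs `L²` version, by induction on coordinates. -/
lemma bonami (T : Finset (Fin n)) (k : ℕ) (c : Finset (Fin n) → ℝ)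
    (hsupp : ∀ S, c S ≠ 0 → S ⊆ T ∧ S.card ≤ k) :
    cubeExpect (fun x => (∑ S : Finset (Fin n), c S * chi S x) ^ 4)
      ≤ 9 ^ k * (∑ S : Finset (Fin n), c S ^ 2) ^ 2 := by
  induction T using Finset.induction generalizing k c with
  | empty =>
    have hp : ∀ x, (∑ S : Finset (Fin n), c S * chi S x) = c ∅ := by
      intro x
      rw [Finset.sum_eq_single ∅]
      · simp [chi]
      · intro S _ hS
        by_contra hc
        have := (hsupp S (by intro h0; rw [h0] at hc; simp at hc)).1
        exact hS (Finset.subset_empty.mp this)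
      · simp
    simp only [hp]
    rw [cubeExpect_const]
    have h1 : c ∅ ^ 2 ≤ ∑ S : Finset (Fin n), c S ^ 2 :=
      Finset.single_le_sum (fun S _ => sq_nonneg (c S)) (Finset.mem_univ ∅)
    have h2 : (1:ℝ) ≤ 9 ^ k := one_le_pow₀ (by norm_num)
    nlinarith [sq_nonneg (c ∅), Finset.sum_nonneg (fun S (_ : S ∈ Finset.univ) => sq_nonneg (c S))]
  | @insert a T' ha IH =>
    -- decompose p = q + x_a * r
    set cq : Finset (Fin n) → ℝ := fun S => if a ∈ S then 0 else c S with hcq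
    set cr : Finset (Fin n) → ℝ := fun S => if a ∈ S then 0 else c (insert a S) with hcr
    set q : (Fin n → Bool) → ℝ := fun x => ∑ S : Finset (Fin n), cq S * chi S x with hq
    set r : (Fin n → Bool) → ℝ := fun x => ∑ S : Finset (Fin n), cr S * chi S x with hr
    have hsplit : ∀ x, (∑ S : Finset (Fin n), c S * chi S x) = q x + sgn (x a) * r x := by
      intro x
      rw [hq, hr]
      rw [← Finset.sum_filter_add_sum_filter_not Finset.univ (fun S : Finset (Fin n) => a ∉ S)
        (fun S => c S * chi S x)]
      congr 1
      · rw [Finset.sum_filter]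
        apply Finset.sum_congr rfl
        intro S _
        by_cases hS : a ∈ S <;> simp [hcq, hS]
      · have hfe : Finset.filter (fun S : Finset (Fin n) => ¬ a ∉ S) Finset.univ
            = Finset.filter (fun S : Finset (Fin n) => a ∈ S) Finset.univ := by
          apply Finset.filter_congr
          intro S _
          simp
        rw [hfe, sum_insert_reindex a (fun S => c S * chi S x), Finset.sum_filter,
          Finset.mul_sum]
        apply Finset.sum_congr rfl
        intro S _
        by_cases hS : a ∈ S
        · simp [hcr, hS]
        · simp only [hS, if_neg, not_false_iff, ite_true, hcr, ite_false]
          rw [chi_insert a S hS]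
          ring
    have hqflip : ∀ x, q (flipAt x a) = q x := by
      intro x
      rw [hq]
      apply Finset.sum_congr rfl
      intro S _
      rw [chi_flipAt]
      by_cases hS : a ∈ S <;> simp [hcq, hS]
    have hrflip : ∀ x, r (flipAt x a) = r x := by
      intro x
      rw [hr]
      apply Finset.sum_congr rfl
      intro S _
      rw [chi_flipAt]
      by_cases hS : a ∈ S <;> simp [hcr, hS]
    -- expectation of p^4 splits
    have hsgn2 : ∀ b : Bool, sgn b ^ 2 = 1 := sgn_sq
    have hexp : ∀ x, (∑ S : Finset (Fin n), c S * chi S x) ^ 4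
        = (q x ^ 4 + 6 * q x ^ 2 * r x ^ 2 + r x ^ 4)
          + sgn (x a) * (4 * q x ^ 3 * r x + 4 * q x * r x ^ 3) := by
      intro x
      rw [hsplit x]
      have h := hsgn2 (x a)
      linear_combination (6 * q x ^ 2 * r x ^ 2 + 4 * q x * r x ^ 3 * sgn (x a)
        + r x ^ 4 * (sgn (x a) ^ 2 + 1)) * h
    have hodd : cubeExpect (fun x => sgn (x a) * (4 * q x ^ 3 * r x + 4 * q x * r x ^ 3)) = 0 := by
      unfold cubeExpect
      rw [sum_eq_zero_of_flip_neg a, zero_div]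
      intro x
      rw [hqflip, hrflip, flipAt_apply_self, sgn_not]
      ring
    have hEadd : ∀ F G : (Fin n → Bool) → ℝ, cubeExpect (fun x => F x + G x)
        = cubeExpect F + cubeExpect G := by
      intro F G
      unfold cubeExpect
      rw [← add_div]
      congr 1
      exact Finset.sum_add_distrib
    have hmain : cubeExpect (fun x => (∑ S : Finset (Fin n), c S * chi S x) ^ 4)
        = cubeExpect (fun x => q x ^ 4) + 6 * cubeExpect (fun x => q x ^ 2 * r x ^ 2)
          + cubeExpect (fun x => r x ^ 4) := by
      have : (fun x => (∑ S : Finset (Fin n), c S * chi S x) ^ 4)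
          = fun x => (q x ^ 4 + 6 * q x ^ 2 * r x ^ 2 + r x ^ 4)
            + sgn (x a) * (4 * q x ^ 3 * r x + 4 * q x * r x ^ 3) := by
        funext x; exact hexp x
      rw [this, hEadd, hodd, add_zero, hEadd, hEadd]
      have h6 : cubeExpect (fun x => 6 * q x ^ 2 * r x ^ 2)
          = 6 * cubeExpect (fun x => q x ^ 2 * r x ^ 2) := by
        rw [← cubeExpect_smul]
        congr 1; funext x; ring
      rw [h6]
    -- coefficient splitting
    have hcoef : ∑ S : Finset (Fin n), c S ^ 2
        = (∑ S : Finset (Fin n), cq S ^ 2) + (∑ S : Finset (Fin n), cr S ^ 2) := by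
      rw [← Finset.sum_filter_add_sum_filter_not Finset.univ
        (fun S : Finset (Fin n) => a ∉ S) (fun S => c S ^ 2)]
      congr 1
      · rw [Finset.sum_filter]
        apply Finset.sum_congr rfl
        intro S _
        by_cases hS : a ∈ S <;> simp [hcq, hS]
      · have hfe : Finset.filter (fun S : Finset (Fin n) => ¬ a ∉ S) Finset.univ
            = Finset.filter (fun S : Finset (Fin n) => a ∈ S) Finset.univ := by
          apply Finset.filter_congr
          intro S _
          simp
        rw [hfe, sum_insert_reindex a (fun S => c S ^ 2), Finset.sum_filter]
        apply Finset.sum_congr rfl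
        intro S _
        by_cases hS : a ∈ S <;> simp [hcr, hS]
    -- apply induction hypothesis
    have hA : cubeExpect (fun x => q x ^ 4) ≤ 9 ^ k * (∑ S : Finset (Fin n), cq S ^ 2) ^ 2 := by
      have : cubeExpect (fun x => q x ^ 4)
          = cubeExpect (fun x => (∑ S : Finset (Fin n), cq S * chi S x) ^ 4) := rfl
      rw [this]
      apply IH k cq
      intro S hS
      have haS : a ∉ S := by
        intro h; rw [hcq] at hS; simp [h] at hS
      have hcS : c S ≠ 0 := by
        rw [hcq] at hS; simpa [haS] using hS
      obtain ⟨h1, h2⟩ := hsupp S hcS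
      refine ⟨?_, h2⟩
      intro x hx
      rcases Finset.mem_insert.mp (h1 hx) with h | h
      · exact absurd (h ▸ hx) haS
      · exact h
    have hB : cubeExpect (fun x => r x ^ 4)
        ≤ 9 ^ (k - 1) * (∑ S : Finset (Fin n), cr S ^ 2) ^ 2 := by
      have : cubeExpect (fun x => r x ^ 4)
          = cubeExpect (fun x => (∑ S : Finset (Fin n), cr S * chi S x) ^ 4) := rfl
      rw [this]
      apply IH (k - 1) cr
      intro S hS
      have haS : a ∉ S := by
        intro h; rw [hcr] at hS; simp [h] at hS
      have hcS : c (insert a S) ≠ 0 := by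
        rw [hcr] at hS; simpa [haS] using hS
      obtain ⟨h1, h2⟩ := hsupp _ hcS
      constructor
      · intro x hx
        have hx1 : x ∈ insert a T' := h1 (Finset.mem_insert_of_mem hx)
        rcases Finset.mem_insert.mp hx1 with h | h
        · exact absurd (h ▸ hx) haS
        · exact h
      · rw [Finset.card_insert_of_notMem haS] at h2
        omega
    -- nonnegativity facts
    have hq4 : 0 ≤ cubeExpect (fun x => q x ^ 4) := cubeExpect_nonneg fun x => by positivity
    have hr4 : 0 ≤ cubeExpect (fun x => r x ^ 4) := cubeExpect_nonneg fun x => by positivity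
    have hqr : 0 ≤ cubeExpect (fun x => q x ^ 2 * r x ^ 2) :=
      cubeExpect_nonneg fun x => by positivity
    have hα : 0 ≤ ∑ S : Finset (Fin n), cq S ^ 2 :=
      Finset.sum_nonneg fun S _ => sq_nonneg _
    have hβ : 0 ≤ ∑ S : Finset (Fin n), cr S ^ 2 :=
      Finset.sum_nonneg fun S _ => sq_nonneg _
    set α := ∑ S : Finset (Fin n), cq S ^ 2
    set β := ∑ S : Finset (Fin n), cr S ^ 2
    -- Cauchy-Schwarz on the middle term
    have hCS : (cubeExpect (fun x => q x ^ 2 * r x ^ 2)) ^ 2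
        ≤ cubeExpect (fun x => q x ^ 4) * cubeExpect (fun x => r x ^ 4) := by
      have := expect_CS (fun x => q x ^ 2) (fun x => r x ^ 2)
      convert this using 3 <;> funext x <;> ring
    rw [hmain, hcoef]
    rcases Nat.eq_zero_or_pos k with hk0 | hkpos
    · -- k = 0 : r is identically zero
      subst hk0
      have hcr0 : ∀ S, cr S = 0 := by
        intro S
        rw [hcr]
        by_cases hS : a ∈ S
        · simp [hS]
        · simp only [hS, ite_false]
          by_contra hc
          have := (hsupp _ hc).2
          rw [Finset.card_insert_of_notMem hS] at this
          omega
      have hrzero : ∀ x, r x = 0 := by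
        intro x
        rw [hr]
        apply Finset.sum_eq_zero
        intro S _
        rw [hcr0 S]
        ring
      have hβ0 : β = 0 := by
        apply Finset.sum_eq_zero
        intro S _
        rw [hcr0 S]
        ring
      have hEr0 : cubeExpect (fun x => r x ^ 4) = 0 := by
        have : (fun x => r x ^ 4) = fun _ => (0:ℝ) := by
          funext x; rw [hrzero x]; ring
        rw [this, cubeExpect_const]
      have hEqr0 : cubeExpect (fun x => q x ^ 2 * r x ^ 2) = 0 := by
        have : (fun x => q x ^ 2 * r x ^ 2) = fun _ => (0:ℝ) := by
          funext x; rw [hrzero x]; ring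
        rw [this, cubeExpect_const]
      rw [hEr0, hEqr0, hβ0]
      simpa using hA
    · -- k ≥ 1
      obtain ⟨k', rfl⟩ := Nat.exists_eq_add_of_le hkpos
      have hk1 : 1 + k' - 1 = k' := by omega
      rw [hk1] at hB
      have h9 : (9:ℝ) ^ (1 + k') = 3 ^ (1 + k') * 3 ^ (1 + k') := by
        rw [← mul_pow]; norm_num
      have h9' : (9:ℝ) ^ k' = 3 ^ k' * 3 ^ k' := by
        rw [← mul_pow]; norm_num
      have h3 : (3:ℝ) ^ (1 + k') = 3 * 3 ^ k' := by
        rw [pow_add, pow_one]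
      have h3n : (0:ℝ) ≤ 3 ^ (1 + k') := pow_nonneg (by norm_num) _
      have h3n' : (0:ℝ) ≤ 3 ^ k' := pow_nonneg (by norm_num) _
      have h9n : (0:ℝ) ≤ 9 ^ (1 + k') := pow_nonneg (by norm_num) _
      have h9n' : (0:ℝ) ≤ 9 ^ k' := pow_nonneg (by norm_num) _
      have hR : 0 ≤ 3 ^ (1 + k') * α * (3 ^ k' * β) :=
        mul_nonneg (mul_nonneg h3n hα) (mul_nonneg h3n' hβ)
      have hABle : cubeExpect (fun x => q x ^ 4) * cubeExpect (fun x => r x ^ 4)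
          ≤ (9 ^ (1 + k') * α ^ 2) * (9 ^ k' * β ^ 2) :=
        mul_le_mul hA hB hr4 (mul_nonneg h9n (sq_nonneg _))
      have hsq : (cubeExpect (fun x => q x ^ 2 * r x ^ 2)) ^ 2
          ≤ (3 ^ (1 + k') * α * (3 ^ k' * β)) ^ 2 := by
        calc (cubeExpect (fun x => q x ^ 2 * r x ^ 2)) ^ 2
            ≤ cubeExpect (fun x => q x ^ 4) * cubeExpect (fun x => r x ^ 4) := hCS
          _ ≤ (9 ^ (1 + k') * α ^ 2) * (9 ^ k' * β ^ 2) := hABle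
          _ = (3 ^ (1 + k') * α * (3 ^ k' * β)) ^ 2 := by rw [h9, h9']; ring
      have hmid : cubeExpect (fun x => q x ^ 2 * r x ^ 2) ≤ 3 ^ (1 + k') * α * (3 ^ k' * β) := by
        have h' := Real.sqrt_le_sqrt hsq
        rwa [Real.sqrt_sq hqr, Real.sqrt_sq hR] at h'
      have h99 : (9:ℝ) ^ (1 + k') = 9 * 9 ^ k' := by rw [pow_add, pow_one]
      have e1 : 6 * (3 ^ (1 + k') * α * (3 ^ k' * β)) = 2 * 9 ^ (1 + k') * (α * β) := by
        rw [h3, h99, h9']; ring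
      have hβ2 : (9:ℝ) ^ k' * β ^ 2 ≤ 9 ^ (1 + k') * β ^ 2 := by
        rw [h99]
        nlinarith [sq_nonneg β, pow_pos (show (0:ℝ) < 9 by norm_num) k']
      nlinarith [hA, hB, hmid, e1, hβ2, mul_nonneg hα hβ,
        pow_pos (show (0:ℝ) < 9 by norm_num) (1+k')]

end Friedgut

namespace Friedgut
variable {n : ℕ}

/-- sets containing i with card ≤ k -/
def lowSets (i : Fin n) (k : ℕ) : Finset (Finset (Fin n)) :=
  Finset.univ.filter (fun S : Finset (Fin n) => i ∈ S ∧ S.card ≤ k)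

set_option maxHeartbeats 1000000 in
/-- Key hypercontractive estimate: low-degree Fourier weight at coordinate `i`
is at most `3^k Inf_i^{3/2}` (stated in squared form). -/
lemma key_W (f : (Fin n → Bool) → ℝ) (hf : ∀ x, f x = 1 ∨ f x = -1) (i : Fin n) (k : ℕ) :
    (∑ S ∈ lowSets i k, fourierCoef f S ^ 2) ^ 2 ≤ 9 ^ k * influence i f ^ 3 := by
  set c : Finset (Fin n) → ℝ :=
    fun S => if i ∈ S ∧ S.card ≤ k then fourierCoef f S else 0 with hc
  set p : (Fin n → Bool) → ℝ := fun x => ∑ S : Finset (Fin n), c S * chi S x with hp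
  set g : (Fin n → Bool) → ℝ := deriv i f with hg
  set W : ℝ := ∑ S ∈ lowSets i k, fourierCoef f S ^ 2 with hW
  have hWnn : 0 ≤ W := Finset.sum_nonneg fun S _ => sq_nonneg _
  have hWc : W = ∑ S : Finset (Fin n), c S ^ 2 := by
    rw [hW, lowSets, Finset.sum_filter]
    apply Finset.sum_congr rfl
    intro S _
    by_cases hS : i ∈ S ∧ S.card ≤ k <;> simp [hc, hS]
  set α : ℝ := influence i f with hαdef
  have hαnn : 0 ≤ α := influence_nonneg f i
  have hαE : α = cubeExpect (fun x => g x * g x) := influence_eq f i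
  -- W = E[g p]
  have hWgp : W = cubeExpect (fun x => g x * p x) := by
    rw [parseval]
    have : ∀ S : Finset (Fin n), fourierCoef g S * fourierCoef p S
        = (if S ∈ lowSets i k then fourierCoef f S ^ 2 else 0) := by
      intro S
      rw [hg, fourierCoef_deriv, hp, fourierCoef_comb, lowSets]
      by_cases h1 : i ∈ S <;> by_cases h2 : S.card ≤ k <;> simp [hc, h1, h2, sq]
    rw [Finset.sum_congr rfl (fun S _ => this S), ← Finset.sum_filter]
    rw [hW]
    congr 1
    ext S
    simp [lowSets]
  -- step 1 : W ≤ E[g² |p|]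
  have hstep1 : W ≤ cubeExpect (fun x => (g x * g x) * |p x|) := by
    rw [hWgp]
    apply cubeExpect_mono
    intro x
    calc g x * p x ≤ |g x * p x| := le_abs_self _
      _ = |g x| * |p x| := abs_mul _ _
      _ = (g x * g x) * |p x| := by rw [← abs_deriv_eq_sq f hf i x]
  have hstep1' : 0 ≤ cubeExpect (fun x => (g x * g x) * |p x|) := le_trans hWnn hstep1
  -- step 2 : (E[g²|p|])² ≤ E[g²] E[g²p²]
  have hstep2 : (cubeExpect (fun x => (g x * g x) * |p x|)) ^ 2
      ≤ α * cubeExpect (fun x => (g x * g x) * (p x * p x)) := by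
    have h := expect_CS g (fun x => g x * |p x|)
    rw [hαE]
    calc (cubeExpect (fun x => (g x * g x) * |p x|)) ^ 2
        = (cubeExpect (fun x => g x * (g x * |p x|))) ^ 2 := by
          congr 2; funext x; ring
      _ ≤ cubeExpect (fun x => g x ^ 2) * cubeExpect (fun x => (g x * |p x|) ^ 2) := h
      _ = cubeExpect (fun x => g x * g x) * cubeExpect (fun x => (g x * g x) * (p x * p x)) := by
          congr 1
          · congr 1; funext x; ring
          · congr 1; funext x
            rw [mul_pow, sq_abs]; ring
  -- step 3 : (E[g²p²])² ≤ E[g²] E[p⁴]  (using g⁴ = g²)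
  have hg4 : ∀ x, (g x * g x) ^ 2 = g x * g x := by
    intro x
    rcases deriv_mem f hf i x with h | h | h <;> rw [hg, h] <;> norm_num
  have hstep3 : (cubeExpect (fun x => (g x * g x) * (p x * p x))) ^ 2
      ≤ α * cubeExpect (fun x => p x ^ 4) := by
    have h := expect_CS (fun x => g x * g x) (fun x => p x * p x)
    rw [hαE]
    calc (cubeExpect (fun x => (g x * g x) * (p x * p x))) ^ 2
        ≤ cubeExpect (fun x => (g x * g x) ^ 2) * cubeExpect (fun x => (p x * p x) ^ 2) := h
      _ = cubeExpect (fun x => g x * g x) * cubeExpect (fun x => p x ^ 4) := by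
          congr 1
          · congr 1; funext x; exact hg4 x
          · congr 1; funext x; ring
  -- step 4 : Bonami
  have hstep4 : cubeExpect (fun x => p x ^ 4) ≤ 9 ^ k * W ^ 2 := by
    rw [hWc]
    apply bonami Finset.univ k c
    intro S hS
    refine ⟨Finset.subset_univ S, ?_⟩
    rw [hc] at hS
    by_contra hcard
    simp only [not_le] at hcard
    have hnot : ¬ (i ∈ S ∧ S.card ≤ k) := fun h => absurd h.2 (not_le.mpr hcard)
    simp only [hnot, ite_false] at hS
    exact hS rfl
  -- combine
  have hgpnn : 0 ≤ cubeExpect (fun x => (g x * g x) * (p x * p x)) :=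
    cubeExpect_nonneg fun x => mul_nonneg (mul_self_nonneg _) (mul_self_nonneg _)
  have hp4nn : 0 ≤ cubeExpect (fun x => p x ^ 4) := cubeExpect_nonneg fun x => by positivity
  have hW4 : W ^ 4 ≤ α ^ 3 * (9 ^ k * W ^ 2) := by
    have h1 : W ^ 2 ≤ α * cubeExpect (fun x => (g x * g x) * (p x * p x)) := by
      calc W ^ 2 ≤ (cubeExpect (fun x => (g x * g x) * |p x|)) ^ 2 :=
            pow_le_pow_left₀ hWnn hstep1 2
        _ ≤ _ := hstep2
    have h2 : (W ^ 2) ^ 2 ≤ (α * cubeExpect (fun x => (g x * g x) * (p x * p x))) ^ 2 :=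
      pow_le_pow_left₀ (by positivity) h1 2
    have h3 : (α * cubeExpect (fun x => (g x * g x) * (p x * p x))) ^ 2
        = α ^ 2 * (cubeExpect (fun x => (g x * g x) * (p x * p x))) ^ 2 := by ring
    calc W ^ 4 = (W ^ 2) ^ 2 := by ring
      _ ≤ α ^ 2 * (cubeExpect (fun x => (g x * g x) * (p x * p x))) ^ 2 := by
          rw [← h3]; exact h2
      _ ≤ α ^ 2 * (α * cubeExpect (fun x => p x ^ 4)) := by
          apply mul_le_mul_of_nonneg_left hstep3 (by positivity)
      _ ≤ α ^ 2 * (α * (9 ^ k * W ^ 2)) := by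
          apply mul_le_mul_of_nonneg_left
            (mul_le_mul_of_nonneg_left hstep4 hαnn) (by positivity)
      _ = α ^ 3 * (9 ^ k * W ^ 2) := by ring
  rcases eq_or_lt_of_le hWnn with h0 | h0
  · rw [← h0]
    norm_num
    positivity
  · have hW2 : (0:ℝ) < W ^ 2 := by positivity
    have := hW4
    have h4 : W ^ 4 = W ^ 2 * W ^ 2 := by ring
    have h5 : α ^ 3 * (9 ^ k * W ^ 2) = (9 ^ k * α ^ 3) * W ^ 2 := by ring
    rw [h4, h5] at this
    exact le_of_mul_le_mul_right this hW2

/-- total influence equals Σ |S| f̂(S)² -/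
lemma total_influence (f : (Fin n → Bool) → ℝ) :
    ∑ i : Fin n, influence i f
      = ∑ S : Finset (Fin n), (S.card : ℝ) * fourierCoef f S ^ 2 := by
  unfold influence
  have h1 : ∀ i : Fin n, ∑ S ∈ Finset.univ.filter (fun S : Finset (Fin n) => i ∈ S),
      fourierCoef f S ^ 2
      = ∑ S : Finset (Fin n), (if i ∈ S then fourierCoef f S ^ 2 else 0) := by
    intro i
    rw [Finset.sum_filter]
  rw [Finset.sum_congr rfl (fun i _ => h1 i), Finset.sum_comm]
  apply Finset.sum_congr rfl
  intro S _
  rw [Finset.sum_ite_mem, Finset.univ_inter, Finset.sum_const, nsmul_eq_mul]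

end Friedgut

namespace Friedgut
variable {n : ℕ}

lemma parseval_self (f : (Fin n → Bool) → ℝ) (hf : ∀ x, f x = 1 ∨ f x = -1) :
    ∑ S : Finset (Fin n), fourierCoef f S ^ 2 = 1 := by
  have h : cubeExpect (fun x => f x * f x) = 1 := by
    have : (fun x => f x * f x) = fun _ => (1:ℝ) := by
      funext x; rcases hf x with h | h <;> rw [h] <;> norm_num
    rw [this, cubeExpect_const]
  rw [← h, parseval]
  apply Finset.sum_congr rfl
  intro S _
  rw [sq]

lemma fourierCoef_empty (f : (Fin n → Bool) → ℝ) :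
    fourierCoef f ∅ = cubeExpect f := by
  unfold fourierCoef
  congr 1
  funext x
  simp [chi]

/-- Markov / tail bound -/
lemma tail_bound (f : (Fin n → Bool) → ℝ) (k : ℕ) :
    (k : ℝ) * ∑ S ∈ Finset.univ.filter (fun S : Finset (Fin n) => k < S.card),
        fourierCoef f S ^ 2
      ≤ ∑ i : Fin n, influence i f := by
  rw [total_influence, Finset.mul_sum]
  calc ∑ S ∈ Finset.univ.filter (fun S : Finset (Fin n) => k < S.card),
        (k:ℝ) * fourierCoef f S ^ 2
      ≤ ∑ S ∈ Finset.univ.filter (fun S : Finset (Fin n) => k < S.card),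
        (S.card : ℝ) * fourierCoef f S ^ 2 := by
        apply Finset.sum_le_sum
        intro S hS
        simp only [Finset.mem_filter] at hS
        have : (k:ℝ) ≤ (S.card : ℝ) := by exact_mod_cast hS.2.le
        nlinarith [sq_nonneg (fourierCoef f S)]
    _ ≤ ∑ S : Finset (Fin n), (S.card : ℝ) * fourierCoef f S ^ 2 := by
        apply Finset.sum_le_sum_of_subset_of_nonneg (Finset.filter_subset _ _)
        intro S _ _
        positivity

/-- double counting of low-degree sets not inside J -/
lemma bad_low_bound (f : (Fin n → Bool) → ℝ) (J : Finset (Fin n)) (k : ℕ) :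
    ∑ S ∈ Finset.univ.filter (fun S : Finset (Fin n) => ¬ S ⊆ J ∧ S.card ≤ k),
        fourierCoef f S ^ 2
      ≤ ∑ i ∈ Finset.univ.filter (fun i : Fin n => i ∉ J),
          ∑ S ∈ lowSets i k, fourierCoef f S ^ 2 := by
  set Bad := Finset.univ.filter (fun S : Finset (Fin n) => ¬ S ⊆ J ∧ S.card ≤ k) with hBad
  have hstep : ∀ S ∈ Bad, fourierCoef f S ^ 2
      ≤ ∑ i ∈ Finset.univ.filter (fun i : Fin n => i ∉ J),
          (if i ∈ S then fourierCoef f S ^ 2 else 0) := by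
    intro S hS
    simp only [hBad, Finset.mem_filter, Finset.mem_univ, true_and] at hS
    obtain ⟨i0, hi0S, hi0J⟩ : ∃ i0, i0 ∈ S ∧ i0 ∉ J := by
      by_contra hc
      push_neg at hc
      exact hS.1 (fun x hx => hc x hx)
    have h := Finset.single_le_sum
      (f := fun i : Fin n => if i ∈ S then fourierCoef f S ^ 2 else 0)
      (fun i _ => by positivity)
      (show i0 ∈ Finset.univ.filter (fun i : Fin n => i ∉ J) by
        simp [hi0J])
    simpa [hi0S] using h
  calc ∑ S ∈ Bad, fourierCoef f S ^ 2
      ≤ ∑ S ∈ Bad, ∑ i ∈ Finset.univ.filter (fun i : Fin n => i ∉ J),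
          (if i ∈ S then fourierCoef f S ^ 2 else 0) := Finset.sum_le_sum hstep
    _ = ∑ i ∈ Finset.univ.filter (fun i : Fin n => i ∉ J),
          ∑ S ∈ Bad, (if i ∈ S then fourierCoef f S ^ 2 else 0) := Finset.sum_comm
    _ ≤ ∑ i ∈ Finset.univ.filter (fun i : Fin n => i ∉ J),
          ∑ S ∈ lowSets i k, fourierCoef f S ^ 2 := by
        apply Finset.sum_le_sum
        intro i _
        rw [← Finset.sum_filter]
        apply Finset.sum_le_sum_of_subset_of_nonneg
        · intro S hS
          simp only [Finset.mem_filter, hBad, Finset.mem_univ, true_and] at hS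
          simp only [lowSets, Finset.mem_filter, Finset.mem_univ, true_and]
          exact ⟨hS.2, hS.1.2⟩
        · intro S _ _
          positivity
  
/-- the distance to the truncated function is the bad Fourier weight -/
lemma dist_eq_bad (f : (Fin n → Bool) → ℝ) (G : Finset (Finset (Fin n))) :
    cubeExpect (fun x =>
        (f x - ∑ S : Finset (Fin n), (if S ∈ G then fourierCoef f S else 0) * chi S x) ^ 2)
      = ∑ S ∈ Finset.univ.filter (fun S : Finset (Fin n) => S ∉ G), fourierCoef f S ^ 2 := by
  set h : (Fin n → Bool) → ℝ :=
    fun x => ∑ S : Finset (Fin n), (if S ∈ G then fourierCoef f S else 0) * chi S x with hh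
  have hcoef : ∀ S, fourierCoef (fun x => f x - h x) S
      = if S ∈ G then 0 else fourierCoef f S := by
    intro S
    rw [fourierCoef_sub, hh, fourierCoef_comb]
    by_cases hS : S ∈ G <;> simp [hS]
  have : (fun x => (f x - h x) ^ 2) = fun x => (f x - h x) * (f x - h x) := by
    funext x; ring
  rw [this, parseval]
  rw [Finset.sum_filter]
  apply Finset.sum_congr rfl
  intro S _
  rw [hcoef]
  by_cases hS : S ∈ G <;> simp [hS, sq]

/-- rounding to a sign function -/
lemma round_bound (f h : (Fin n → Bool) → ℝ) (hf : ∀ x, f x = 1 ∨ f x = -1) :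
    cubeExpect (fun x => |f x - (if 0 ≤ h x then (1:ℝ) else -1)|)
      ≤ 2 * cubeExpect (fun x => (f x - h x) ^ 2) := by
  rw [← cubeExpect_smul]
  apply cubeExpect_mono
  intro x
  rcases hf x with h1 | h1 <;> rw [h1] <;> by_cases h2 : 0 ≤ h x <;>
    simp only [h2, if_true, if_false] <;> rw [abs_le] <;> constructor <;>
    [skip; skip; skip; skip; skip; skip; push_neg at h2; push_neg at h2] <;>
    nlinarith [sq_nonneg (h x)]

end Friedgut

namespace Friedgut

lemma le_of_sq_le_sq' {a b : ℝ} (ha : 0 ≤ a) (hb : 0 ≤ b) (h : a ^ 2 ≤ b ^ 2) : a ≤ b := by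
  have h' := Real.sqrt_le_sqrt h
  rwa [Real.sqrt_sq ha, Real.sqrt_sq hb] at h'

lemma cubeExpect_one_sub_smul {n : ℕ} (s : ℝ) (f : (Fin n → Bool) → ℝ) :
    cubeExpect (fun x => 1 - s * f x) = 1 - s * cubeExpect f := by
  have : (fun x : Fin n → Bool => 1 - s * f x)
      = fun x => (fun _ : Fin n → Bool => (1:ℝ)) x + (fun x => (-s) * f x) x := by
    funext x; ring
  rw [this]
  have hadd : ∀ F G : (Fin n → Bool) → ℝ, cubeExpect (fun x => F x + G x)
      = cubeExpect F + cubeExpect G := by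
    intro F G
    unfold cubeExpect
    rw [← add_div]
    congr 1
    exact Finset.sum_add_distrib
  rw [hadd, cubeExpect_const, cubeExpect_smul]
  ring

end Friedgut

set_option maxHeartbeats 2000000 in
/-- **Friedgut's junta theorem**: there is a universal constant `C > 0` such that for every
`n ≥ 1`, every `f : {-1,1}^n → {-1,1}` and every `ε ∈ (0,1)`, there are a set
`J ⊆ {1,…,n}` with `|J| ≤ exp(C·Inf(f)/ε)` and a function `g : {-1,1}^n → {-1,1}`
depending only on the coordinates in `J` with `E|f − g| ≤ ε`.
Here `Inf(f) = Σ_i Inf_i(f)` is the total influence. -/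
theorem friedgut_junta :
    ∃ C : ℝ, 0 < C ∧
      ∀ n : ℕ, 1 ≤ n → ∀ f : (Fin n → Bool) → ℝ, (∀ x, f x = 1 ∨ f x = -1) →
        ∀ ε : ℝ, 0 < ε → ε < 1 →
          ∃ J : Finset (Fin n),
            (J.card : ℝ) ≤ Real.exp (C * (∑ i : Fin n, influence i f) / ε) ∧
            ∃ g : (Fin n → Bool) → ℝ, (∀ x, g x = 1 ∨ g x = -1) ∧
              (∀ x y, (∀ i ∈ J, x i = y i) → g x = g y) ∧
              cubeExpect (fun x => |f x - g x|) ≤ ε := by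
  classical
  refine ⟨22, by norm_num, ?_⟩
  intro n _ f hf ε hε0 hε1
  open Friedgut in
  set I := ∑ i : Fin n, influence i f with hI
  have hInn : 0 ≤ I := Finset.sum_nonneg fun i _ => influence_nonneg f i
  have hItot := total_influence f
  have hpar := parseval_self f hf
  by_cases hcase : I ≤ ε
  · -- trivial case: take a constant function
    set s : ℝ := if 0 ≤ cubeExpect f then (1:ℝ) else -1 with hs
    refine ⟨∅, by simpa using (Real.exp_pos _).le, fun _ => s, ?_, fun x y _ => rfl, ?_⟩
    · intro x
      by_cases h : 0 ≤ cubeExpect f <;> simp [hs, h]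
    · set μ := cubeExpect f with hμ
      have habs : ∀ x, |f x - s| = 1 - s * f x := by
        intro x
        rcases hf x with h | h <;> rw [h, hs] <;> by_cases h2 : 0 ≤ μ <;>
          simp [h2] <;> norm_num
      have hE : cubeExpect (fun x => |f x - s|) = 1 - s * μ := by
        rw [show (fun x => |f x - s|) = fun x => 1 - s * f x from funext habs]
        exact cubeExpect_one_sub_smul s f
      have hsμ : s * μ = |μ| := by
        rw [hs]
        by_cases h2 : 0 ≤ μ
        · rw [if_pos h2, one_mul, abs_of_nonneg h2]
        · rw [if_neg h2, abs_of_neg (not_le.mp h2)]; ring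
      -- μ = f̂(∅), and 1 - μ² ≤ I
      have hμ0 : μ = fourierCoef f ∅ := (fourierCoef_empty f).symm
      have hvar : 1 - μ ^ 2 ≤ I := by
        rw [hI, hItot]
        have hsplit : ∑ S : Finset (Fin n), fourierCoef f S ^ 2
            = fourierCoef f ∅ ^ 2
              + ∑ S ∈ Finset.univ.erase ∅, fourierCoef f S ^ 2 :=
          (Finset.add_sum_erase _ (fun S => fourierCoef f S ^ 2) (Finset.mem_univ ∅)).symm
        have h2 : ∑ S ∈ Finset.univ.erase ∅, fourierCoef f S ^ 2
            ≤ ∑ S ∈ Finset.univ.erase ∅, (S.card : ℝ) * fourierCoef f S ^ 2 := by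
          apply Finset.sum_le_sum
          intro S hS
          have hSne : S ≠ ∅ := Finset.ne_of_mem_erase hS
          have : 1 ≤ S.card := Finset.card_pos.mpr (Finset.nonempty_iff_ne_empty.mpr hSne)
          have h1 : (1:ℝ) ≤ (S.card : ℝ) := by exact_mod_cast this
          nlinarith [sq_nonneg (fourierCoef f S)]
        have h3 : ∑ S ∈ Finset.univ.erase ∅, (S.card : ℝ) * fourierCoef f S ^ 2
            ≤ ∑ S : Finset (Fin n), (S.card : ℝ) * fourierCoef f S ^ 2 := by
          apply Finset.sum_le_sum_of_subset_of_nonneg (Finset.erase_subset _ _)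
          intro S _ _
          positivity
        have := hpar
        rw [hsplit] at this
        rw [hμ0]
        linarith
      have hμ1 : |μ| ≤ 1 := by
        have h1 : μ ^ 2 ≤ 1 := by
          rw [hμ0]
          rw [← hpar]
          exact Finset.single_le_sum (fun S _ => sq_nonneg (fourierCoef f S))
            (Finset.mem_univ ∅)
        nlinarith [abs_nonneg μ, sq_abs μ]
      rw [hE, hsμ]
      have : 1 - |μ| ≤ 1 - μ ^ 2 := by nlinarith [abs_nonneg μ, sq_abs μ]
      linarith
  · -- main case
    push_neg at hcase
    have hIpos : 0 < I := lt_trans hε0 hcase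
    set t : ℝ := I / ε with ht
    have ht1 : 1 < t := (one_lt_div hε0).mpr hcase
    have ht0 : 0 < t := by linarith
    set k : ℕ := ⌈(4:ℝ) * I / ε⌉₊ with hk
    have hk4 : 4 * I / ε ≤ (k : ℝ) := Nat.le_ceil _
    have hkpos : (0:ℝ) < (k : ℝ) :=
      lt_of_lt_of_le (by positivity) hk4
    have hkup : (k : ℝ) < 4 * t + 1 := by
      have := Nat.ceil_lt_add_one
        (show (0:ℝ) ≤ 4 * I / ε from div_nonneg (by linarith) hε0.le)
      calc (k:ℝ) < 4 * I / ε + 1 := this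
        _ = 4 * t + 1 := by rw [ht]; ring
    have h3kpos : (0:ℝ) < 3 ^ k := by positivity
    set σ : ℝ := ε / (4 * 3 ^ k * I) with hσ
    have hσpos : 0 < σ := by positivity
    set τ : ℝ := σ ^ 2 with hτ
    have hτpos : 0 < τ := by positivity
    set J : Finset (Fin n) := Finset.univ.filter (fun i : Fin n => τ ≤ influence i f) with hJ
    set G : Finset (Finset (Fin n)) :=
      Finset.univ.filter (fun S : Finset (Fin n) => S ⊆ J ∧ S.card ≤ k) with hG
    set h : (Fin n → Bool) → ℝ :=
      fun x => ∑ S : Finset (Fin n), (if S ∈ G then fourierCoef f S else 0) * chi S x with hh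
    have h39 : ((3:ℝ) ^ k) ^ 2 = 9 ^ k := by
      rw [← pow_mul, mul_comm, pow_mul]
      norm_num
    -- tail bound
    set tail : ℝ := ∑ S ∈ Finset.univ.filter (fun S : Finset (Fin n) => k < S.card),
        fourierCoef f S ^ 2 with htail
    have htailnn : 0 ≤ tail := Finset.sum_nonneg fun S _ => sq_nonneg _
    have htail4 : tail ≤ ε / 4 := by
      have h1 : (k : ℝ) * tail ≤ I := by rw [htail, hI]; exact tail_bound f k
      have h2 : 4 * I ≤ ε * k := by
        rw [div_le_iff₀ hε0] at hk4
        linarith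
      nlinarith
    -- low-degree bad bound
    set lowbad : ℝ := ∑ S ∈ Finset.univ.filter
        (fun S : Finset (Fin n) => ¬ S ⊆ J ∧ S.card ≤ k), fourierCoef f S ^ 2 with hlowbad
    have hlowbadnn : 0 ≤ lowbad := Finset.sum_nonneg fun S _ => sq_nonneg _
    have hlow4 : lowbad ≤ ε / 4 := by
      have h1 : lowbad ≤ ∑ i ∈ Finset.univ.filter (fun i : Fin n => i ∉ J),
          ∑ S ∈ lowSets i k, fourierCoef f S ^ 2 := bad_low_bound f J k
      have h2 : ∀ i ∈ Finset.univ.filter (fun i : Fin n => i ∉ J),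
          ∑ S ∈ lowSets i k, fourierCoef f S ^ 2 ≤ 3 ^ k * σ * influence i f := by
        intro i hi
        simp only [hJ, Finset.mem_filter, Finset.mem_univ, true_and, not_le] at hi
        have hWsq := key_W f hf i k
        have hWnn : 0 ≤ ∑ S ∈ lowSets i k, fourierCoef f S ^ 2 :=
          Finset.sum_nonneg fun S _ => sq_nonneg _
        apply le_of_sq_le_sq' hWnn
          (mul_nonneg (mul_nonneg h3kpos.le hσpos.le) (influence_nonneg f i))
        calc (∑ S ∈ lowSets i k, fourierCoef f S ^ 2) ^ 2
            ≤ 9 ^ k * influence i f ^ 3 := hWsq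
          _ ≤ 9 ^ k * (influence i f ^ 2 * τ) := by
              apply mul_le_mul_of_nonneg_left ?_ (by positivity)
              have := influence_nonneg f i
              nlinarith [hi.le, sq_nonneg (influence i f)]
          _ = (3 ^ k * σ * influence i f) ^ 2 := by
              rw [hτ, ← h39]; ring
      have h3 : ∑ i ∈ Finset.univ.filter (fun i : Fin n => i ∉ J),
          ∑ S ∈ lowSets i k, fourierCoef f S ^ 2
          ≤ ∑ i ∈ Finset.univ.filter (fun i : Fin n => i ∉ J),
            3 ^ k * σ * influence i f := Finset.sum_le_sum h2
      have h4 : ∑ i ∈ Finset.univ.filter (fun i : Fin n => i ∉ J),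
          3 ^ k * σ * influence i f ≤ 3 ^ k * σ * I := by
        rw [← Finset.mul_sum, hI]
        apply mul_le_mul_of_nonneg_left ?_ (by positivity)
        apply Finset.sum_le_sum_of_subset_of_nonneg (Finset.filter_subset _ _)
        intro i _ _
        exact influence_nonneg f i
      have h5 : 3 ^ k * σ * I = ε / 4 := by
        rw [hσ]
        field_simp
      linarith
    -- cardinality bound
    have hcard : (J.card : ℝ) ≤ 16 * 9 ^ k * I ^ 3 / ε ^ 2 := by
      have h1 : (J.card : ℝ) * τ ≤ I := by
        have : (J.card : ℝ) * τ = ∑ _i ∈ J, τ := by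
          rw [Finset.sum_const, nsmul_eq_mul]
        rw [this, hI]
        calc ∑ _i ∈ J, τ ≤ ∑ i ∈ J, influence i f := by
              apply Finset.sum_le_sum
              intro i hi
              simp only [hJ, Finset.mem_filter] at hi
              exact hi.2
          _ ≤ ∑ i : Fin n, influence i f := by
              apply Finset.sum_le_sum_of_subset_of_nonneg (Finset.subset_univ J)
              intro i _ _
              exact influence_nonneg f i
      have h2 : I / τ = 16 * 9 ^ k * I ^ 3 / ε ^ 2 := by
        rw [hτ, hσ, ← h39]
        field_simp
        ring
      rw [← h2]
      rw [le_div_iff₀ hτpos]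
      exact h1
    refine ⟨J, ?_, fun x => if 0 ≤ h x then (1:ℝ) else -1, ?_, ?_, ?_⟩
    · -- card J ≤ exp(22 I / ε)
      have hexp : 16 * 9 ^ k * I ^ 3 / ε ^ 2 ≤ Real.exp (22 * t) := by
        have hIe : I = t * ε := by rw [ht]; field_simp
        have hfact : 16 * 9 ^ k * I ^ 3 / ε ^ 2 = 16 * 9 ^ k * (t ^ 3 * ε) := by
          rw [hIe]; field_simp
        rw [hfact]
        have hb1 : (16:ℝ) ≤ Real.exp (4 * t) := by
          have he2 : (2:ℝ) ≤ Real.exp 1 := by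
            have := Real.exp_one_gt_d9
            linarith
          have he3 : Real.exp 1 ≤ Real.exp t := Real.exp_le_exp.mpr ht1.le
          have : (16:ℝ) = 2 ^ (4:ℕ) := by norm_num
          rw [this]
          calc (2:ℝ) ^ (4:ℕ) ≤ (Real.exp t) ^ (4:ℕ) :=
                pow_le_pow_left₀ (by norm_num) (le_trans he2 he3) 4
            _ = Real.exp ((4:ℕ) * t) := (Real.exp_nat_mul t 4).symm
            _ = Real.exp (4 * t) := by norm_num
        have hb2 : (9:ℝ) ^ k ≤ Real.exp (15 * t) := by
          have hlog9 : Real.log 9 ≤ 3 := by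
            rw [Real.log_le_iff_le_exp (by norm_num)]
            have h1 : Real.exp 3 = (Real.exp 1) ^ (3:ℕ) := by
              rw [← Real.exp_nat_mul]; norm_num
            rw [h1]
            have ha : (2.7:ℝ) ≤ Real.exp 1 := by linarith [Real.exp_one_gt_d9]
            have hb : (2.7:ℝ) ^ (3:ℕ) ≤ (Real.exp 1) ^ (3:ℕ) :=
              pow_le_pow_left₀ (by norm_num) ha 3
            have hc : (9:ℝ) ≤ (2.7:ℝ) ^ (3:ℕ) := by norm_num
            linarith
          have h9e : (9:ℝ) ^ k = Real.exp (k * Real.log 9) := by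
            conv_lhs => rw [show (9:ℝ) = Real.exp (Real.log 9) from
              (Real.exp_log (by norm_num)).symm]
            rw [← Real.exp_nat_mul]
          rw [h9e]
          apply Real.exp_le_exp.mpr
          have hlognn : 0 ≤ Real.log 9 := Real.log_nonneg (by norm_num)
          calc (k:ℝ) * Real.log 9 ≤ (4 * t + 1) * Real.log 9 :=
                mul_le_mul_of_nonneg_right hkup.le hlognn
            _ ≤ (5 * t) * 3 := by nlinarith
            _ = 15 * t := by ring
        have hb3 : t ^ 3 * ε ≤ Real.exp (3 * t) := by
          have h1 : t ≤ Real.exp t := by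
            have := Real.add_one_le_exp t
            linarith
          have h2 : t ^ 3 ≤ (Real.exp t) ^ (3:ℕ) := by
            calc t ^ 3 = t ^ (3:ℕ) := by norm_num
              _ ≤ (Real.exp t) ^ (3:ℕ) := pow_le_pow_left₀ ht0.le h1 3
          have h3 : (Real.exp t) ^ (3:ℕ) = Real.exp (3 * t) := by
            rw [← Real.exp_nat_mul]; norm_num
          nlinarith [pow_pos ht0 3, Real.exp_pos (3 * t)]
        calc 16 * 9 ^ k * (t ^ 3 * ε)
            ≤ Real.exp (4 * t) * Real.exp (15 * t) * Real.exp (3 * t) := by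
              apply mul_le_mul ?_ hb3 (by positivity) (by positivity)
              apply mul_le_mul hb1 hb2 (by positivity) (by positivity)
          _ = Real.exp (22 * t) := by
              rw [← Real.exp_add, ← Real.exp_add]
              ring_nf
      have hteq : 22 * I / ε = 22 * t := by rw [ht]; ring
      rw [hteq]
      exact le_trans hcard hexp
    · intro x
      by_cases hx : 0 ≤ h x <;> simp [hx]
    · -- depends only on J
      intro x y hxy
      have hhxy : h x = h y := by
        rw [hh]
        apply Finset.sum_congr rfl
        intro S _
        by_cases hSG : S ∈ G
        · have hSJ : S ⊆ J := by
            rw [hG] at hSG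
            simp only [Finset.mem_filter, Finset.mem_univ, true_and] at hSG
            exact hSG.1
          have : chi S x = chi S y := by
            unfold chi
            apply Finset.prod_congr rfl
            intro i hi
            rw [hxy i (hSJ hi)]
          rw [this]
        · simp [hSG]
      simp only [hhxy]
    · -- distance bound
      have hround := round_bound f h hf
      have hdist : cubeExpect (fun x => (f x - h x) ^ 2)
          = ∑ S ∈ Finset.univ.filter (fun S : Finset (Fin n) => S ∉ G),
              fourierCoef f S ^ 2 := dist_eq_bad f G
      have hbadsplit : ∑ S ∈ Finset.univ.filter (fun S : Finset (Fin n) => S ∉ G),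
          fourierCoef f S ^ 2 ≤ tail + lowbad := by
        rw [← Finset.sum_filter_add_sum_filter_not
          (Finset.univ.filter (fun S : Finset (Fin n) => S ∉ G))
          (fun S : Finset (Fin n) => k < S.card), htail, hlowbad]
        apply add_le_add
        · apply Finset.sum_le_sum_of_subset_of_nonneg
          · intro S hS
            simp only [Finset.mem_filter, Finset.mem_univ, true_and] at hS ⊢
            exact hS.2
          · intro S _ _; positivity
        · apply Finset.sum_le_sum_of_subset_of_nonneg
          · intro S hS
            simp only [Finset.mem_filter, Finset.mem_univ, true_and, not_lt, hG] at hS ⊢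
            refine ⟨?_, hS.2⟩
            intro hSJ
            exact hS.1 ⟨hSJ, hS.2⟩
          · intro S _ _; positivity
      calc cubeExpect (fun x => |f x - if 0 ≤ h x then (1:ℝ) else -1|)
          ≤ 2 * cubeExpect (fun x => (f x - h x) ^ 2) := hround
        _ ≤ 2 * (tail + lowbad) := by
            rw [hdist]
            linarith
        _ ≤ ε := by linarith
end
end
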